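/- arXiv:2411.18992 — 8 statements merged into one kernel-verified Lean document; each statement's English description precedes it below -/
import Mathlib

section
/- Let m ≥ 3 and let n be a positive multiple of 11, and let 0 ≤ ℓ < n. Suppose there exist an integer k and a ∈ {1,2} such that ℓ = (11k + (−1)^a·4m) mod n or ℓ = (11k + (−1)^a·3m) mod n. Then the λ-number of the strong graph bundle C_m ⊠^{σ_ℓ} C_n equals 10. -/
/-- One-directional step relation for the strong graph bundle `C_m ⊠^{σ_ℓ} C_n`:
(i) fiber edges, (ii) base steps `i → i+1` for `0 ≤ i ≤ m-2`,
(iii) seam edges from fiber over `m-1` to fiber over `0`, twisted by the cyclic `ℓ`-shift. -/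
def bundleStep (m n ℓ : ℕ) (u v : Fin m × ZMod n) : Prop :=
  (u.1 = v.1 ∧ (v.2 = u.2 + 1 ∨ v.2 = u.2 - 1)) ∨
  ((u.1 : ℕ) + 1 = (v.1 : ℕ) ∧ (v.2 = u.2 - 1 ∨ v.2 = u.2 ∨ v.2 = u.2 + 1)) ∨
  ((u.1 : ℕ) = m - 1 ∧ (v.1 : ℕ) = 0 ∧
    (v.2 = u.2 + (ℓ : ZMod n) - 1 ∨ v.2 = u.2 + (ℓ : ZMod n) ∨ v.2 = u.2 + (ℓ : ZMod n) + 1))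

/-- The strong graph bundle `C_m ⊠^{σ_ℓ} C_n` with base cycle `C_m`, fiber cycle `C_n`
and cyclic `ℓ`-shift. -/
def strongBundle (m n ℓ : ℕ) : SimpleGraph (Fin m × ZMod n) where
  Adj u v := u ≠ v ∧ (bundleStep m n ℓ u v ∨ bundleStep m n ℓ v u)
  symm := ⟨fun u v ⟨h1, h2⟩ => ⟨h1.symm, h2.symm⟩⟩
  loopless := ⟨fun u h => h.1 rfl⟩

/-- `f` is an `L(2,1)`-labeling of `G`: labels of adjacent vertices differ by at least 2,
labels of vertices at distance 2 differ by at least 1. -/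
def IsL21Labeling {V : Type*} (G : SimpleGraph V) (f : V → ℕ) : Prop :=
  (∀ u v, G.Adj u v → 2 ≤ |(f u : ℤ) - (f v : ℤ)|) ∧
  (∀ u v, G.dist u v = 2 → 1 ≤ |(f u : ℤ) - (f v : ℤ)|)

/-- The span of a labeling: largest label minus smallest label. -/
noncomputable def spanOf {V : Type*} (f : V → ℕ) : ℕ :=
  sSup (Set.range f) - sInf (Set.range f)

/-- The `λ`-number of `G`: the minimum span over all `L(2,1)`-labelings of `G`. -/
noncomputable def lambdaNumber {V : Type*} (G : SimpleGraph V) : ℕ :=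
  sInf { s : ℕ | ∃ f : V → ℕ, IsL21Labeling G f ∧ spanOf f = s }


namespace L21A

/-- base-raising step with fiber drift `δ ∈ {-1,0,1}` (normal or seam). -/
def Up (m n ℓ : ℕ) (u v : Fin m × ZMod n) (δ : ℤ) : Prop :=
  ((u.1 : ℕ) + 1 = (v.1 : ℕ) ∧ v.2 = u.2 + (δ : ZMod n)) ∨
  ((u.1 : ℕ) = m - 1 ∧ (v.1 : ℕ) = 0 ∧ v.2 = u.2 + (ℓ : ZMod n) + (δ : ZMod n))

/-- fiber step -/
def Fib (m n : ℕ) (u v : Fin m × ZMod n) (e : ℤ) : Prop :=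
  u.1 = v.1 ∧ v.2 = u.2 + (e : ZMod n)

lemma adj_classify {m n ℓ : ℕ} {u v : Fin m × ZMod n}
    (h : (strongBundle m n ℓ).Adj u v) :
    (∃ e : ℤ, (e = 1 ∨ e = -1) ∧ Fib m n u v e) ∨
    (∃ δ : ℤ, (δ = -1 ∨ δ = 0 ∨ δ = 1) ∧ (Up m n ℓ u v δ ∨ Up m n ℓ v u δ)) := by
  obtain ⟨-, h | h⟩ := h
  · rcases h with ⟨h1, h2 | h2⟩ | ⟨h1, h2 | h2 | h2⟩ | ⟨h1, h1', h2 | h2 | h2⟩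
    · exact Or.inl ⟨1, Or.inl rfl, h1, by push_cast; exact h2⟩
    · exact Or.inl ⟨-1, Or.inr rfl, h1, by push_cast [sub_eq_add_neg] at h2 ⊢; exact h2⟩
    · exact Or.inr ⟨-1, by tauto, Or.inl (Or.inl ⟨h1, by push_cast [sub_eq_add_neg] at h2 ⊢; exact h2⟩)⟩
    · exact Or.inr ⟨0, by tauto, Or.inl (Or.inl ⟨h1, by push_cast; simpa using h2⟩)⟩
    · exact Or.inr ⟨1, by tauto, Or.inl (Or.inl ⟨h1, by push_cast; exact h2⟩)⟩
    · exact Or.inr ⟨-1, by tauto, Or.inl (Or.inr ⟨h1, h1', by push_cast [sub_eq_add_neg] at h2 ⊢; exact h2⟩)⟩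
    · exact Or.inr ⟨0, by tauto, Or.inl (Or.inr ⟨h1, h1', by push_cast; simpa using h2⟩)⟩
    · exact Or.inr ⟨1, by tauto, Or.inl (Or.inr ⟨h1, h1', by push_cast; exact h2⟩)⟩
  · rcases h with ⟨h1, h2 | h2⟩ | ⟨h1, h2 | h2 | h2⟩ | ⟨h1, h1', h2 | h2 | h2⟩
    · exact Or.inl ⟨-1, Or.inr rfl, h1.symm, by push_cast; rw [h2]; ring⟩
    · exact Or.inl ⟨1, Or.inl rfl, h1.symm, by push_cast; rw [h2]; ring⟩
    · exact Or.inr ⟨-1, by tauto, Or.inr (Or.inl ⟨h1, by push_cast [sub_eq_add_neg] at h2 ⊢; exact h2⟩)⟩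
    · exact Or.inr ⟨0, by tauto, Or.inr (Or.inl ⟨h1, by push_cast; simpa using h2⟩)⟩
    · exact Or.inr ⟨1, by tauto, Or.inr (Or.inl ⟨h1, by push_cast; exact h2⟩)⟩
    · exact Or.inr ⟨-1, by tauto, Or.inr (Or.inr ⟨h1, h1', by push_cast [sub_eq_add_neg] at h2 ⊢; exact h2⟩)⟩
    · exact Or.inr ⟨0, by tauto, Or.inr (Or.inr ⟨h1, h1', by push_cast; simpa using h2⟩)⟩
    · exact Or.inr ⟨1, by tauto, Or.inr (Or.inr ⟨h1, h1', by push_cast; exact h2⟩)⟩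


variable {m n ℓ : ℕ}

noncomputable def phi (hn : 11 ∣ n) (a b : ZMod 11) (u : Fin m × ZMod n) : ZMod 11 :=
  a * ((u.1 : ℕ) : ZMod 11) + b * (ZMod.castHom hn (ZMod 11) u.2)

lemma phi_fib (hn : 11 ∣ n) (a b : ZMod 11) {u v : Fin m × ZMod n} {e : ℤ}
    (h : Fib m n u v e) : phi hn a b v - phi hn a b u = (e : ZMod 11) * b := by
  obtain ⟨h1, h2⟩ := h
  simp only [phi, h1, h2, map_add, map_intCast]
  ring

lemma phi_up (hn : 11 ∣ n) (a b : ZMod 11) (hm : 1 ≤ m)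
    (hseam : a * (m : ZMod 11) = b * (ℓ : ZMod 11))
    {u v : Fin m × ZMod n} {δ : ℤ}
    (h : Up m n ℓ u v δ) : phi hn a b v - phi hn a b u = a + (δ : ZMod 11) * b := by
  rcases h with ⟨h1, h2⟩ | ⟨h1, h1', h2⟩
  · simp only [phi, ← h1, h2, map_add, map_intCast]
    push_cast
    ring
  · simp only [phi, h1, h1', h2, map_add, map_intCast, map_natCast]
    have hm' : ((m - 1 : ℕ) : ZMod 11) = (m : ZMod 11) - 1 := by
      push_cast [Nat.cast_sub hm]; ring
    rw [hm']
    push_cast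
    linear_combination -hseam

-- structural injectivity
lemma up_inj_left (hm : 3 ≤ m) {u v w : Fin m × ZMod n} {δ : ℤ}
    (h1 : Up m n ℓ u w δ) (h2 : Up m n ℓ v w δ) : u = v := by
  rcases h1 with ⟨a1, b1⟩ | ⟨a1, a1', b1⟩ <;> rcases h2 with ⟨a2, b2⟩ | ⟨a2, a2', b2⟩
  · exact Prod.ext (Fin.ext (by omega)) (add_right_cancel (b1.symm.trans b2))
  · exfalso; omega
  · exfalso; omega
  · exact Prod.ext (Fin.ext (by omega))
      (add_right_cancel (add_right_cancel (b1.symm.trans b2)))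

lemma up_inj_right (hm : 3 ≤ m) {u v w : Fin m × ZMod n} {δ : ℤ}
    (h1 : Up m n ℓ w u δ) (h2 : Up m n ℓ w v δ) : u = v := by
  rcases h1 with ⟨a1, b1⟩ | ⟨a1, a1', b1⟩ <;> rcases h2 with ⟨a2, b2⟩ | ⟨a2, a2', b2⟩
  · exact Prod.ext (Fin.ext (by omega)) (b1.trans b2.symm)
  · exfalso; have := u.1.isLt; omega
  · exfalso; have := v.1.isLt; omega
  · exact Prod.ext (Fin.ext (by omega)) (b1.trans b2.symm)


def GoodCore (a b : ZMod 11) : Prop :=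
  (∀ α β : ZMod 11,
      (α = 0 ∨ α = 1 ∨ α = 2 ∨ α = -1 ∨ α = -2) →
      (β = 0 ∨ β = 1 ∨ β = 2 ∨ β = -1 ∨ β = -2) →
      ¬(α = 0 ∧ β = 0) → α * a + β * b ≠ 0) ∧
  (∀ α β : ZMod 11,
      (α = 0 ∨ α = 1 ∨ α = -1) → (β = 0 ∨ β = 1 ∨ β = -1) →
      ¬(α = 0 ∧ β = 0) → (α * a + β * b ≠ 1 ∧ α * a + β * b ≠ -1))

set_option synthInstance.maxSize 1000 in
set_option maxHeartbeats 1000000 in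
lemma good_pairs : GoodCore 9 5 ∧ GoodCore 2 5 ∧ GoodCore 6 2 ∧ GoodCore 5 2 := by
  unfold GoodCore; decide

lemma good_ne {a b : ZMod 11} (hG : GoodCore a b) {α β : ℤ}
    (hα : -2 ≤ α ∧ α ≤ 2) (hβ : -2 ≤ β ∧ β ≤ 2) (h0 : ¬(α = 0 ∧ β = 0)) :
    (α : ZMod 11) * a + (β : ZMod 11) * b ≠ 0 := by
  obtain ⟨hα1, hα2⟩ := hα; obtain ⟨hβ1, hβ2⟩ := hβ
  interval_cases α <;> interval_cases β <;>
    first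
    | omega
    | (push_cast; exact hG.1 _ _ (by decide) (by decide) (by decide))

lemma good_sep {a b : ZMod 11} (hG : GoodCore a b) {α β : ℤ}
    (hα : -1 ≤ α ∧ α ≤ 1) (hβ : -1 ≤ β ∧ β ≤ 1) (h0 : ¬(α = 0 ∧ β = 0)) :
    (α : ZMod 11) * a + (β : ZMod 11) * b ≠ 0 ∧
    (α : ZMod 11) * a + (β : ZMod 11) * b ≠ 1 ∧
    (α : ZMod 11) * a + (β : ZMod 11) * b ≠ -1 := by
  obtain ⟨hα1, hα2⟩ := hα; obtain ⟨hβ1, hβ2⟩ := hβ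
  interval_cases α <;> interval_cases β <;>
    first
    | omega
    | (push_cast;
       exact ⟨hG.1 _ _ (by decide) (by decide) (by decide),
         (hG.2 _ _ (by decide) (by decide) (by decide)).1,
         (hG.2 _ _ (by decide) (by decide) (by decide)).2⟩)

lemma sep_two {x y : ZMod 11} (h0 : x - y ≠ 0) (h1 : x - y ≠ 1) (h2 : x - y ≠ -1) :
    2 ≤ |(x.val : ℤ) - (y.val : ℤ)| := by
  revert h0 h1 h2; revert x y; decide

lemma sep_one {x y : ZMod 11} (h0 : x - y ≠ 0) :
    1 ≤ |(x.val : ℤ) - (y.val : ℤ)| := by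
  revert h0; revert x y; decide



variable {m n ℓ : ℕ}

lemma sep_two' {x y r : ZMod 11} (E : y - x = r) (h0 : r ≠ 0) (h1 : r ≠ 1) (h2 : r ≠ -1) :
    2 ≤ |(x.val : ℤ) - (y.val : ℤ)| := by
  have hxy : x - y = -r := by linear_combination -E
  exact sep_two (by rw [hxy]; exact neg_ne_zero.mpr h0)
    (by rw [hxy]; intro hc; exact h2 (by linear_combination -hc))
    (by rw [hxy]; intro hc; exact h1 (by linear_combination -hc))

lemma sep_one' {x y r : ZMod 11} (E : y - x = r) (h0 : r ≠ 0) :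
    1 ≤ |(x.val : ℤ) - (y.val : ℤ)| := by
  have hxy : x - y = -r := by linear_combination -E
  exact sep_one (by rw [hxy]; exact neg_ne_zero.mpr h0)

lemma phi_adj_sep (hn : 11 ∣ n) {a b : ZMod 11} (hG : GoodCore a b) (hm : 3 ≤ m)
    (hseam : a * (m : ZMod 11) = b * (ℓ : ZMod 11))
    {u v : Fin m × ZMod n} (h : (strongBundle m n ℓ).Adj u v) :
    2 ≤ |((phi hn a b u).val : ℤ) - ((phi hn a b v).val : ℤ)| := by
  have hm1 : 1 ≤ m := by omega
  rcases adj_classify h with ⟨e, he, F⟩ | ⟨δ, hδ, U | U⟩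
  · have E := phi_fib hn a b F
    have hb : -1 ≤ e ∧ e ≤ 1 := by rcases he with h' | h' <;> omega
    have hg := good_sep hG (α := 0) (β := e) (by omega) hb (by
      rcases he with h' | h' <;> omega)
    push_cast at hg
    rw [zero_mul, zero_add] at hg
    exact sep_two' E hg.1 hg.2.1 hg.2.2
  · have E := phi_up hn a b hm1 hseam U
    have hg := good_sep hG (α := 1) (β := δ) (by omega) (by omega) (by omega)
    push_cast at hg
    rw [one_mul] at hg
    exact sep_two' E hg.1 hg.2.1 hg.2.2
  · have E := phi_up hn a b hm1 hseam U
    have hg := good_sep hG (α := 1) (β := δ) (by omega) (by omega) (by omega)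
    push_cast at hg
    rw [one_mul] at hg
    rw [abs_sub_comm]
    exact sep_two' E hg.1 hg.2.1 hg.2.2

lemma fib_comp_eq {u w v : Fin m × ZMod n} {e1 e2 : ℤ}
    (F1 : Fib m n u w e1) (F2 : Fib m n w v e2) (hz : e1 + e2 = 0) : v = u := by
  have h2' : ((e1 : ZMod n)) + (e2 : ZMod n) = 0 := by
    rw [← Int.cast_add, hz, Int.cast_zero]
  refine Prod.ext (F1.1.trans F2.1).symm ?_
  rw [F2.2, F1.2, add_assoc, h2', add_zero]

lemma phi_two_sep (hn : 11 ∣ n) {a b : ZMod 11} (hG : GoodCore a b) (hm : 3 ≤ m)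
    (hseam : a * (m : ZMod 11) = b * (ℓ : ZMod 11))
    {u w v : Fin m × ZMod n} (h1 : (strongBundle m n ℓ).Adj u w)
    (h2 : (strongBundle m n ℓ).Adj w v) (hne : u ≠ v) :
    1 ≤ |((phi hn a b u).val : ℤ) - ((phi hn a b v).val : ℤ)| := by
  have hm1 : 1 ≤ m := by omega
  rcases adj_classify h1 with ⟨e1, he1, F1⟩ | ⟨δ1, hδ1, U1 | U1⟩ <;>
    rcases adj_classify h2 with ⟨e2, he2, F2⟩ | ⟨δ2, hδ2, U2 | U2⟩
  · -- Fib, Fib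
    by_cases hz : e1 + e2 = 0
    · exact absurd (fib_comp_eq F1 F2 hz).symm hne
    · have E1 := phi_fib hn a b F1; have E2 := phi_fib hn a b F2
      have E : phi hn a b v - phi hn a b u = ((e1 + e2 : ℤ) : ZMod 11) * b := by
        push_cast; linear_combination E1 + E2
      refine sep_one' E (by
        have := good_ne hG (α := 0) (β := e1 + e2)
          (by omega) (by rcases he1 with h | h <;> rcases he2 with h' | h' <;> omega)
          (by omega)
        push_cast at this ⊢
        rw [zero_mul, zero_add] at this
        exact this)
  · -- Fib, Up w v
    have E1 := phi_fib hn a b F1; have E2 := phi_up hn a b hm1 hseam U2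
    have E : phi hn a b v - phi hn a b u = ((1:ℤ) : ZMod 11) * a + ((e1 + δ2 : ℤ) : ZMod 11) * b := by
      push_cast; linear_combination E1 + E2
    refine sep_one' E ?_
    exact good_ne hG (by omega) (by rcases he1 with h | h <;> omega) (by omega)
  · -- Fib, Up v w
    have E1 := phi_fib hn a b F1; have E2 := phi_up hn a b hm1 hseam U2
    have E : phi hn a b v - phi hn a b u = ((-1:ℤ) : ZMod 11) * a + ((e1 - δ2 : ℤ) : ZMod 11) * b := by
      push_cast; linear_combination E1 - E2
    refine sep_one' E ?_
    exact good_ne hG (by omega) (by rcases he1 with h | h <;> omega) (by omega)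
  · -- Up u w, Fib
    have E1 := phi_up hn a b hm1 hseam U1; have E2 := phi_fib hn a b F2
    have E : phi hn a b v - phi hn a b u = ((1:ℤ) : ZMod 11) * a + ((δ1 + e2 : ℤ) : ZMod 11) * b := by
      push_cast; linear_combination E1 + E2
    refine sep_one' E ?_
    exact good_ne hG (by omega) (by rcases he2 with h | h <;> omega) (by omega)
  · -- Up u w, Up w v
    have E1 := phi_up hn a b hm1 hseam U1; have E2 := phi_up hn a b hm1 hseam U2
    have E : phi hn a b v - phi hn a b u = ((2:ℤ) : ZMod 11) * a + ((δ1 + δ2 : ℤ) : ZMod 11) * b := by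
      push_cast; linear_combination E1 + E2
    refine sep_one' E ?_
    exact good_ne hG (by omega) (by omega) (by omega)
  · -- Up u w, Up v w
    by_cases hz : δ1 = δ2
    · subst hz; exact absurd (up_inj_left hm U1 U2) hne
    · have E1 := phi_up hn a b hm1 hseam U1; have E2 := phi_up hn a b hm1 hseam U2
      have E : phi hn a b v - phi hn a b u = ((δ1 - δ2 : ℤ) : ZMod 11) * b := by
        push_cast; linear_combination E1 - E2
      refine sep_one' E (by
        have := good_ne hG (α := 0) (β := δ1 - δ2) (by omega) (by omega) (by omega)
        push_cast at this ⊢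
        rw [zero_mul, zero_add] at this
        exact this)
  · -- Up w u, Fib
    have E1 := phi_up hn a b hm1 hseam U1; have E2 := phi_fib hn a b F2
    have E : phi hn a b v - phi hn a b u = ((-1:ℤ) : ZMod 11) * a + ((e2 - δ1 : ℤ) : ZMod 11) * b := by
      push_cast; linear_combination E2 - E1
    refine sep_one' E ?_
    exact good_ne hG (by omega) (by rcases he2 with h | h <;> omega) (by omega)
  · -- Up w u, Up w v
    by_cases hz : δ1 = δ2
    · subst hz; exact absurd (up_inj_right hm U1 U2) hne
    · have E1 := phi_up hn a b hm1 hseam U1; have E2 := phi_up hn a b hm1 hseam U2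
      have E : phi hn a b v - phi hn a b u = ((δ2 - δ1 : ℤ) : ZMod 11) * b := by
        push_cast; linear_combination E2 - E1
      refine sep_one' E (by
        have := good_ne hG (α := 0) (β := δ2 - δ1) (by omega) (by omega) (by omega)
        push_cast at this ⊢
        rw [zero_mul, zero_add] at this
        exact this)
  · -- Up w u, Up v w
    have E1 := phi_up hn a b hm1 hseam U1; have E2 := phi_up hn a b hm1 hseam U2
    have E : phi hn a b v - phi hn a b u = ((-2:ℤ) : ZMod 11) * a + ((-δ1 - δ2 : ℤ) : ZMod 11) * b := by
      push_cast; linear_combination -E1 - E2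
    refine sep_one' E ?_
    exact good_ne hG (by omega) (by omega) (by omega)

lemma dist_two_decomp {V : Type*} {G : SimpleGraph V} {u v : V} (h : G.dist u v = 2) :
    u ≠ v ∧ ∃ w, G.Adj u w ∧ G.Adj w v := by
  have h0 : G.dist u v ≠ 0 := by omega
  obtain ⟨hne, -⟩ := SimpleGraph.dist_ne_zero_iff_ne_and_reachable.mp h0
  obtain ⟨p, hp⟩ := SimpleGraph.exists_walk_of_dist_ne_zero h0
  rw [h] at hp
  refine ⟨hne, ?_⟩
  cases p with
  | nil => simp at hp
  | cons h1 q =>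
    cases q with
    | nil => simp at hp
    | cons h2 r =>
      cases r with
      | nil => exact ⟨_, h1, h2⟩
      | cons h3 s => simp at hp

lemma ub (hm : 3 ≤ m) (hn0 : 0 < n) (hn : 11 ∣ n) {a b : ZMod 11} (hG : GoodCore a b)
    (hseam : a * (m : ZMod 11) = b * (ℓ : ZMod 11)) :
    ∃ f : Fin m × ZMod n → ℕ, IsL21Labeling (strongBundle m n ℓ) f ∧ spanOf f ≤ 10 := by
  haveI : NeZero n := ⟨hn0.ne'⟩
  refine ⟨fun u => (phi hn a b u).val, ⟨?_, ?_⟩, ?_⟩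
  · intro u v h; exact phi_adj_sep hn hG hm hseam h
  · intro u v hd
    obtain ⟨hne, w, hw1, hw2⟩ := dist_two_decomp hd
    exact phi_two_sep hn hG hm hseam hw1 hw2 hne
  · have hne : Nonempty (Fin m × ZMod n) := ⟨⟨⟨0, by omega⟩, 0⟩⟩
    have hbd : sSup (Set.range fun u : Fin m × ZMod n => (phi hn a b u).val) ≤ 10 := by
      refine csSup_le (Set.range_nonempty _) ?_
      rintro x ⟨u, rfl⟩
      show (phi hn a b u).val ≤ 10
      have := ZMod.val_lt (phi hn a b u)
      omega
    unfold spanOf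
    omega

lemma ne_of_fst {u v : Fin m × ZMod n} (h : (u.1 : ℕ) ≠ (v.1 : ℕ)) : u ≠ v := by
  intro he; rw [he] at h; exact h rfl

lemma ne_of_snd {u v : Fin m × ZMod n} (h : u.2 ≠ v.2) : u ≠ v := by
  intro he; rw [he] at h; exact h rfl


lemma adj_mk {u v : Fin m × ZMod n} (hne : u ≠ v)
    (h : bundleStep m n ℓ u v ∨ bundleStep m n ℓ v u) : (strongBundle m n ℓ).Adj u v := ⟨hne, h⟩

lemma eight_nbrs (hm : 3 ≤ m) (hn11 : 11 ≤ n) (u : Fin m × ZMod n) :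
    ∃ g : Fin 8 → Fin m × ZMod n, Function.Injective g ∧
      ∀ i, (strongBundle m n ℓ).Adj u (g i) := by
  have hn1 : (1 : ZMod n) ≠ 0 := by
    intro hc
    have hd := (ZMod.natCast_eq_zero_iff 1 n).mp (by exact_mod_cast hc)
    have := Nat.le_of_dvd one_pos hd
    omega
  have hn2 : (2 : ZMod n) ≠ 0 := by
    intro hc
    have hd := (ZMod.natCast_eq_zero_iff 2 n).mp (by exact_mod_cast hc)
    have := Nat.le_of_dvd two_pos hd
    omega
  have hiv := u.1.isLt
  by_cases h0 : (u.1 : ℕ) = 0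
  · -- bottom row
    have hnd : ([(u.1, u.2 + 1),
      (u.1, u.2 - 1),
      (⟨(u.1 : ℕ) + 1, by omega⟩, u.2 - 1),
      (⟨(u.1 : ℕ) + 1, by omega⟩, u.2),
      (⟨(u.1 : ℕ) + 1, by omega⟩, u.2 + 1),
      (⟨m - 1, by omega⟩, u.2 - (ℓ : ZMod n) - 1),
      (⟨m - 1, by omega⟩, u.2 - (ℓ : ZMod n)),
      (⟨m - 1, by omega⟩, u.2 - (ℓ : ZMod n) + 1)] : List (Fin m × ZMod n)).Nodup := by
      simp only [List.nodup_cons, List.mem_cons, List.not_mem_nil, or_false, not_or,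
        List.nodup_nil, and_true]
      refine ⟨⟨?_, ?_, ?_, ?_, ?_, ?_, ?_⟩, ⟨?_, ?_, ?_, ?_, ?_, ?_⟩, ⟨?_, ?_, ?_, ?_, ?_⟩, ⟨?_, ?_, ?_, ?_⟩, ⟨?_, ?_, ?_⟩, ⟨?_, ?_⟩, ⟨?_, not_false⟩⟩
      · exact ne_of_snd (by intro hc; first
                  | exact hn1 (by linear_combination hc)
                  | exact hn1 (by linear_combination -hc)
                  | exact hn2 (by linear_combination hc)
                  | exact hn2 (by linear_combination -hc))
      · exact ne_of_fst (show (u.1 : ℕ) ≠ (u.1 : ℕ) + 1 by omega)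
      · exact ne_of_fst (show (u.1 : ℕ) ≠ (u.1 : ℕ) + 1 by omega)
      · exact ne_of_fst (show (u.1 : ℕ) ≠ (u.1 : ℕ) + 1 by omega)
      · exact ne_of_fst (show (u.1 : ℕ) ≠ m - 1 by omega)
      · exact ne_of_fst (show (u.1 : ℕ) ≠ m - 1 by omega)
      · exact ne_of_fst (show (u.1 : ℕ) ≠ m - 1 by omega)
      · exact ne_of_fst (show (u.1 : ℕ) ≠ (u.1 : ℕ) + 1 by omega)
      · exact ne_of_fst (show (u.1 : ℕ) ≠ (u.1 : ℕ) + 1 by omega)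
      · exact ne_of_fst (show (u.1 : ℕ) ≠ (u.1 : ℕ) + 1 by omega)
      · exact ne_of_fst (show (u.1 : ℕ) ≠ m - 1 by omega)
      · exact ne_of_fst (show (u.1 : ℕ) ≠ m - 1 by omega)
      · exact ne_of_fst (show (u.1 : ℕ) ≠ m - 1 by omega)
      · exact ne_of_snd (by intro hc; first
                  | exact hn1 (by linear_combination hc)
                  | exact hn1 (by linear_combination -hc)
                  | exact hn2 (by linear_combination hc)
                  | exact hn2 (by linear_combination -hc))
      · exact ne_of_snd (by intro hc; first
                  | exact hn1 (by linear_combination hc)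
                  | exact hn1 (by linear_combination -hc)
                  | exact hn2 (by linear_combination hc)
                  | exact hn2 (by linear_combination -hc))
      · exact ne_of_fst (show (u.1 : ℕ) + 1 ≠ m - 1 by omega)
      · exact ne_of_fst (show (u.1 : ℕ) + 1 ≠ m - 1 by omega)
      · exact ne_of_fst (show (u.1 : ℕ) + 1 ≠ m - 1 by omega)
      · exact ne_of_snd (by intro hc; first
                  | exact hn1 (by linear_combination hc)
                  | exact hn1 (by linear_combination -hc)
                  | exact hn2 (by linear_combination hc)
                  | exact hn2 (by linear_combination -hc))
      · exact ne_of_fst (show (u.1 : ℕ) + 1 ≠ m - 1 by omega)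
      · exact ne_of_fst (show (u.1 : ℕ) + 1 ≠ m - 1 by omega)
      · exact ne_of_fst (show (u.1 : ℕ) + 1 ≠ m - 1 by omega)
      · exact ne_of_fst (show (u.1 : ℕ) + 1 ≠ m - 1 by omega)
      · exact ne_of_fst (show (u.1 : ℕ) + 1 ≠ m - 1 by omega)
      · exact ne_of_fst (show (u.1 : ℕ) + 1 ≠ m - 1 by omega)
      · exact ne_of_snd (by intro hc; first
                  | exact hn1 (by linear_combination hc)
                  | exact hn1 (by linear_combination -hc)
                  | exact hn2 (by linear_combination hc)
                  | exact hn2 (by linear_combination -hc))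
      · exact ne_of_snd (by intro hc; first
                  | exact hn1 (by linear_combination hc)
                  | exact hn1 (by linear_combination -hc)
                  | exact hn2 (by linear_combination hc)
                  | exact hn2 (by linear_combination -hc))
      · exact ne_of_snd (by intro hc; first
                  | exact hn1 (by linear_combination hc)
                  | exact hn1 (by linear_combination -hc)
                  | exact hn2 (by linear_combination hc)
                  | exact hn2 (by linear_combination -hc))
    have a0 : (strongBundle m n ℓ).Adj u (u.1, u.2 + 1) := adj_mk (v := (u.1, u.2 + 1)) (ne_of_snd (by intro hc; first
                | exact hn1 (by linear_combination hc)
                | exact hn1 (by linear_combination -hc)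
                | exact hn2 (by linear_combination hc)
                | exact hn2 (by linear_combination -hc))) (Or.inl (Or.inl ⟨rfl, Or.inl rfl⟩))
    have a1 : (strongBundle m n ℓ).Adj u (u.1, u.2 - 1) := adj_mk (v := (u.1, u.2 - 1)) (ne_of_snd (by intro hc; first
                | exact hn1 (by linear_combination hc)
                | exact hn1 (by linear_combination -hc)
                | exact hn2 (by linear_combination hc)
                | exact hn2 (by linear_combination -hc))) (Or.inl (Or.inl ⟨rfl, Or.inr rfl⟩))
    have a2 : (strongBundle m n ℓ).Adj u (⟨(u.1 : ℕ) + 1, by omega⟩, u.2 - 1) := adj_mk (ne_of_fst (show (u.1 : ℕ) ≠ (u.1 : ℕ) + 1 by omega)) (Or.inl (Or.inr (Or.inl ⟨rfl, Or.inl rfl⟩)))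
    have a3 : (strongBundle m n ℓ).Adj u (⟨(u.1 : ℕ) + 1, by omega⟩, u.2) := adj_mk (ne_of_fst (show (u.1 : ℕ) ≠ (u.1 : ℕ) + 1 by omega)) (Or.inl (Or.inr (Or.inl ⟨rfl, Or.inr (Or.inl rfl)⟩)))
    have a4 : (strongBundle m n ℓ).Adj u (⟨(u.1 : ℕ) + 1, by omega⟩, u.2 + 1) := adj_mk (ne_of_fst (show (u.1 : ℕ) ≠ (u.1 : ℕ) + 1 by omega)) (Or.inl (Or.inr (Or.inl ⟨rfl, Or.inr (Or.inr rfl)⟩)))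
    have a5 : (strongBundle m n ℓ).Adj u (⟨m - 1, by omega⟩, u.2 - (ℓ : ZMod n) - 1) := adj_mk (ne_of_fst (show (u.1 : ℕ) ≠ m - 1 by omega)) (Or.inr (Or.inr (Or.inr ⟨rfl, h0, Or.inr (Or.inr (by ring))⟩)))
    have a6 : (strongBundle m n ℓ).Adj u (⟨m - 1, by omega⟩, u.2 - (ℓ : ZMod n)) := adj_mk (ne_of_fst (show (u.1 : ℕ) ≠ m - 1 by omega)) (Or.inr (Or.inr (Or.inr ⟨rfl, h0, Or.inr (Or.inl (by ring))⟩)))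
    have a7 : (strongBundle m n ℓ).Adj u (⟨m - 1, by omega⟩, u.2 - (ℓ : ZMod n) + 1) := adj_mk (ne_of_fst (show (u.1 : ℕ) ≠ m - 1 by omega)) (Or.inr (Or.inr (Or.inr ⟨rfl, h0, Or.inl (by ring)⟩)))
    refine ⟨fun i : Fin 8 => ([(u.1, u.2 + 1),
      (u.1, u.2 - 1),
      (⟨(u.1 : ℕ) + 1, by omega⟩, u.2 - 1),
      (⟨(u.1 : ℕ) + 1, by omega⟩, u.2),
      (⟨(u.1 : ℕ) + 1, by omega⟩, u.2 + 1),
      (⟨m - 1, by omega⟩, u.2 - (ℓ : ZMod n) - 1),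
      (⟨m - 1, by omega⟩, u.2 - (ℓ : ZMod n)),
      (⟨m - 1, by omega⟩, u.2 - (ℓ : ZMod n) + 1)] : List (Fin m × ZMod n)).get ⟨i.1, i.2⟩, ?_, ?_⟩
    · intro x y hxy
      have h' := (List.Nodup.get_inj_iff hnd).mp hxy
      exact Fin.ext (congrArg Fin.val h')
    · intro i
      fin_cases i
      · exact a0
      · exact a1
      · exact a2
      · exact a3
      · exact a4
      · exact a5
      · exact a6
      · exact a7

  · by_cases hB : (u.1 : ℕ) = m - 1
    · -- top row
      have hnd : ([(u.1, u.2 + 1),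
        (u.1, u.2 - 1),
        (⟨0, by omega⟩, u.2 + (ℓ : ZMod n) - 1),
        (⟨0, by omega⟩, u.2 + (ℓ : ZMod n)),
        (⟨0, by omega⟩, u.2 + (ℓ : ZMod n) + 1),
        (⟨(u.1 : ℕ) - 1, by omega⟩, u.2 - 1),
        (⟨(u.1 : ℕ) - 1, by omega⟩, u.2),
        (⟨(u.1 : ℕ) - 1, by omega⟩, u.2 + 1)] : List (Fin m × ZMod n)).Nodup := by
        simp only [List.nodup_cons, List.mem_cons, List.not_mem_nil, or_false, not_or,
          List.nodup_nil, and_true]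
        refine ⟨⟨?_, ?_, ?_, ?_, ?_, ?_, ?_⟩, ⟨?_, ?_, ?_, ?_, ?_, ?_⟩, ⟨?_, ?_, ?_, ?_, ?_⟩, ⟨?_, ?_, ?_, ?_⟩, ⟨?_, ?_, ?_⟩, ⟨?_, ?_⟩, ⟨?_, not_false⟩⟩
        · exact ne_of_snd (by intro hc; first
                    | exact hn1 (by linear_combination hc)
                    | exact hn1 (by linear_combination -hc)
                    | exact hn2 (by linear_combination hc)
                    | exact hn2 (by linear_combination -hc))
        · exact ne_of_fst (show (u.1 : ℕ) ≠ 0 by omega)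
        · exact ne_of_fst (show (u.1 : ℕ) ≠ 0 by omega)
        · exact ne_of_fst (show (u.1 : ℕ) ≠ 0 by omega)
        · exact ne_of_fst (show (u.1 : ℕ) ≠ (u.1 : ℕ) - 1 by omega)
        · exact ne_of_fst (show (u.1 : ℕ) ≠ (u.1 : ℕ) - 1 by omega)
        · exact ne_of_fst (show (u.1 : ℕ) ≠ (u.1 : ℕ) - 1 by omega)
        · exact ne_of_fst (show (u.1 : ℕ) ≠ 0 by omega)
        · exact ne_of_fst (show (u.1 : ℕ) ≠ 0 by omega)
        · exact ne_of_fst (show (u.1 : ℕ) ≠ 0 by omega)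
        · exact ne_of_fst (show (u.1 : ℕ) ≠ (u.1 : ℕ) - 1 by omega)
        · exact ne_of_fst (show (u.1 : ℕ) ≠ (u.1 : ℕ) - 1 by omega)
        · exact ne_of_fst (show (u.1 : ℕ) ≠ (u.1 : ℕ) - 1 by omega)
        · exact ne_of_snd (by intro hc; first
                    | exact hn1 (by linear_combination hc)
                    | exact hn1 (by linear_combination -hc)
                    | exact hn2 (by linear_combination hc)
                    | exact hn2 (by linear_combination -hc))
        · exact ne_of_snd (by intro hc; first
                    | exact hn1 (by linear_combination hc)
                    | exact hn1 (by linear_combination -hc)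
                    | exact hn2 (by linear_combination hc)
                    | exact hn2 (by linear_combination -hc))
        · exact ne_of_fst (show 0 ≠ (u.1 : ℕ) - 1 by omega)
        · exact ne_of_fst (show 0 ≠ (u.1 : ℕ) - 1 by omega)
        · exact ne_of_fst (show 0 ≠ (u.1 : ℕ) - 1 by omega)
        · exact ne_of_snd (by intro hc; first
                    | exact hn1 (by linear_combination hc)
                    | exact hn1 (by linear_combination -hc)
                    | exact hn2 (by linear_combination hc)
                    | exact hn2 (by linear_combination -hc))
        · exact ne_of_fst (show 0 ≠ (u.1 : ℕ) - 1 by omega)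
        · exact ne_of_fst (show 0 ≠ (u.1 : ℕ) - 1 by omega)
        · exact ne_of_fst (show 0 ≠ (u.1 : ℕ) - 1 by omega)
        · exact ne_of_fst (show 0 ≠ (u.1 : ℕ) - 1 by omega)
        · exact ne_of_fst (show 0 ≠ (u.1 : ℕ) - 1 by omega)
        · exact ne_of_fst (show 0 ≠ (u.1 : ℕ) - 1 by omega)
        · exact ne_of_snd (by intro hc; first
                    | exact hn1 (by linear_combination hc)
                    | exact hn1 (by linear_combination -hc)
                    | exact hn2 (by linear_combination hc)
                    | exact hn2 (by linear_combination -hc))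
        · exact ne_of_snd (by intro hc; first
                    | exact hn1 (by linear_combination hc)
                    | exact hn1 (by linear_combination -hc)
                    | exact hn2 (by linear_combination hc)
                    | exact hn2 (by linear_combination -hc))
        · exact ne_of_snd (by intro hc; first
                    | exact hn1 (by linear_combination hc)
                    | exact hn1 (by linear_combination -hc)
                    | exact hn2 (by linear_combination hc)
                    | exact hn2 (by linear_combination -hc))
      have a0 : (strongBundle m n ℓ).Adj u (u.1, u.2 + 1) := adj_mk (v := (u.1, u.2 + 1)) (ne_of_snd (by intro hc; first
                  | exact hn1 (by linear_combination hc)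
                  | exact hn1 (by linear_combination -hc)
                  | exact hn2 (by linear_combination hc)
                  | exact hn2 (by linear_combination -hc))) (Or.inl (Or.inl ⟨rfl, Or.inl rfl⟩))
      have a1 : (strongBundle m n ℓ).Adj u (u.1, u.2 - 1) := adj_mk (v := (u.1, u.2 - 1)) (ne_of_snd (by intro hc; first
                  | exact hn1 (by linear_combination hc)
                  | exact hn1 (by linear_combination -hc)
                  | exact hn2 (by linear_combination hc)
                  | exact hn2 (by linear_combination -hc))) (Or.inl (Or.inl ⟨rfl, Or.inr rfl⟩))
      have a2 : (strongBundle m n ℓ).Adj u (⟨0, by omega⟩, u.2 + (ℓ : ZMod n) - 1) := adj_mk (ne_of_fst (show (u.1 : ℕ) ≠ 0 by omega)) (Or.inl (Or.inr (Or.inr ⟨hB, rfl, Or.inl rfl⟩)))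
      have a3 : (strongBundle m n ℓ).Adj u (⟨0, by omega⟩, u.2 + (ℓ : ZMod n)) := adj_mk (ne_of_fst (show (u.1 : ℕ) ≠ 0 by omega)) (Or.inl (Or.inr (Or.inr ⟨hB, rfl, Or.inr (Or.inl rfl)⟩)))
      have a4 : (strongBundle m n ℓ).Adj u (⟨0, by omega⟩, u.2 + (ℓ : ZMod n) + 1) := adj_mk (ne_of_fst (show (u.1 : ℕ) ≠ 0 by omega)) (Or.inl (Or.inr (Or.inr ⟨hB, rfl, Or.inr (Or.inr rfl)⟩)))
      have a5 : (strongBundle m n ℓ).Adj u (⟨(u.1 : ℕ) - 1, by omega⟩, u.2 - 1) := adj_mk (ne_of_fst (show (u.1 : ℕ) ≠ (u.1 : ℕ) - 1 by omega)) (Or.inr (Or.inr (Or.inl ⟨show (u.1 : ℕ) - 1 + 1 = (u.1 : ℕ) by omega, Or.inr (Or.inr (by ring))⟩)))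
      have a6 : (strongBundle m n ℓ).Adj u (⟨(u.1 : ℕ) - 1, by omega⟩, u.2) := adj_mk (ne_of_fst (show (u.1 : ℕ) ≠ (u.1 : ℕ) - 1 by omega)) (Or.inr (Or.inr (Or.inl ⟨show (u.1 : ℕ) - 1 + 1 = (u.1 : ℕ) by omega, Or.inr (Or.inl (by ring))⟩)))
      have a7 : (strongBundle m n ℓ).Adj u (⟨(u.1 : ℕ) - 1, by omega⟩, u.2 + 1) := adj_mk (ne_of_fst (show (u.1 : ℕ) ≠ (u.1 : ℕ) - 1 by omega)) (Or.inr (Or.inr (Or.inl ⟨show (u.1 : ℕ) - 1 + 1 = (u.1 : ℕ) by omega, Or.inl (by ring)⟩)))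
      refine ⟨fun i : Fin 8 => ([(u.1, u.2 + 1),
        (u.1, u.2 - 1),
        (⟨0, by omega⟩, u.2 + (ℓ : ZMod n) - 1),
        (⟨0, by omega⟩, u.2 + (ℓ : ZMod n)),
        (⟨0, by omega⟩, u.2 + (ℓ : ZMod n) + 1),
        (⟨(u.1 : ℕ) - 1, by omega⟩, u.2 - 1),
        (⟨(u.1 : ℕ) - 1, by omega⟩, u.2),
        (⟨(u.1 : ℕ) - 1, by omega⟩, u.2 + 1)] : List (Fin m × ZMod n)).get ⟨i.1, i.2⟩, ?_, ?_⟩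
      · intro x y hxy
        have h' := (List.Nodup.get_inj_iff hnd).mp hxy
        exact Fin.ext (congrArg Fin.val h')
      · intro i
        fin_cases i
        · exact a0
        · exact a1
        · exact a2
        · exact a3
        · exact a4
        · exact a5
        · exact a6
        · exact a7

    · -- middle
      have hnd : ([(u.1, u.2 + 1),
        (u.1, u.2 - 1),
        (⟨(u.1 : ℕ) + 1, by omega⟩, u.2 - 1),
        (⟨(u.1 : ℕ) + 1, by omega⟩, u.2),
        (⟨(u.1 : ℕ) + 1, by omega⟩, u.2 + 1),
        (⟨(u.1 : ℕ) - 1, by omega⟩, u.2 - 1),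
        (⟨(u.1 : ℕ) - 1, by omega⟩, u.2),
        (⟨(u.1 : ℕ) - 1, by omega⟩, u.2 + 1)] : List (Fin m × ZMod n)).Nodup := by
        simp only [List.nodup_cons, List.mem_cons, List.not_mem_nil, or_false, not_or,
          List.nodup_nil, and_true]
        refine ⟨⟨?_, ?_, ?_, ?_, ?_, ?_, ?_⟩, ⟨?_, ?_, ?_, ?_, ?_, ?_⟩, ⟨?_, ?_, ?_, ?_, ?_⟩, ⟨?_, ?_, ?_, ?_⟩, ⟨?_, ?_, ?_⟩, ⟨?_, ?_⟩, ⟨?_, not_false⟩⟩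
        · exact ne_of_snd (by intro hc; first
                    | exact hn1 (by linear_combination hc)
                    | exact hn1 (by linear_combination -hc)
                    | exact hn2 (by linear_combination hc)
                    | exact hn2 (by linear_combination -hc))
        · exact ne_of_fst (show (u.1 : ℕ) ≠ (u.1 : ℕ) + 1 by omega)
        · exact ne_of_fst (show (u.1 : ℕ) ≠ (u.1 : ℕ) + 1 by omega)
        · exact ne_of_fst (show (u.1 : ℕ) ≠ (u.1 : ℕ) + 1 by omega)
        · exact ne_of_fst (show (u.1 : ℕ) ≠ (u.1 : ℕ) - 1 by omega)
        · exact ne_of_fst (show (u.1 : ℕ) ≠ (u.1 : ℕ) - 1 by omega)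
        · exact ne_of_fst (show (u.1 : ℕ) ≠ (u.1 : ℕ) - 1 by omega)
        · exact ne_of_fst (show (u.1 : ℕ) ≠ (u.1 : ℕ) + 1 by omega)
        · exact ne_of_fst (show (u.1 : ℕ) ≠ (u.1 : ℕ) + 1 by omega)
        · exact ne_of_fst (show (u.1 : ℕ) ≠ (u.1 : ℕ) + 1 by omega)
        · exact ne_of_fst (show (u.1 : ℕ) ≠ (u.1 : ℕ) - 1 by omega)
        · exact ne_of_fst (show (u.1 : ℕ) ≠ (u.1 : ℕ) - 1 by omega)
        · exact ne_of_fst (show (u.1 : ℕ) ≠ (u.1 : ℕ) - 1 by omega)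
        · exact ne_of_snd (by intro hc; first
                    | exact hn1 (by linear_combination hc)
                    | exact hn1 (by linear_combination -hc)
                    | exact hn2 (by linear_combination hc)
                    | exact hn2 (by linear_combination -hc))
        · exact ne_of_snd (by intro hc; first
                    | exact hn1 (by linear_combination hc)
                    | exact hn1 (by linear_combination -hc)
                    | exact hn2 (by linear_combination hc)
                    | exact hn2 (by linear_combination -hc))
        · exact ne_of_fst (show (u.1 : ℕ) + 1 ≠ (u.1 : ℕ) - 1 by omega)
        · exact ne_of_fst (show (u.1 : ℕ) + 1 ≠ (u.1 : ℕ) - 1 by omega)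
        · exact ne_of_fst (show (u.1 : ℕ) + 1 ≠ (u.1 : ℕ) - 1 by omega)
        · exact ne_of_snd (by intro hc; first
                    | exact hn1 (by linear_combination hc)
                    | exact hn1 (by linear_combination -hc)
                    | exact hn2 (by linear_combination hc)
                    | exact hn2 (by linear_combination -hc))
        · exact ne_of_fst (show (u.1 : ℕ) + 1 ≠ (u.1 : ℕ) - 1 by omega)
        · exact ne_of_fst (show (u.1 : ℕ) + 1 ≠ (u.1 : ℕ) - 1 by omega)
        · exact ne_of_fst (show (u.1 : ℕ) + 1 ≠ (u.1 : ℕ) - 1 by omega)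
        · exact ne_of_fst (show (u.1 : ℕ) + 1 ≠ (u.1 : ℕ) - 1 by omega)
        · exact ne_of_fst (show (u.1 : ℕ) + 1 ≠ (u.1 : ℕ) - 1 by omega)
        · exact ne_of_fst (show (u.1 : ℕ) + 1 ≠ (u.1 : ℕ) - 1 by omega)
        · exact ne_of_snd (by intro hc; first
                    | exact hn1 (by linear_combination hc)
                    | exact hn1 (by linear_combination -hc)
                    | exact hn2 (by linear_combination hc)
                    | exact hn2 (by linear_combination -hc))
        · exact ne_of_snd (by intro hc; first
                    | exact hn1 (by linear_combination hc)
                    | exact hn1 (by linear_combination -hc)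
                    | exact hn2 (by linear_combination hc)
                    | exact hn2 (by linear_combination -hc))
        · exact ne_of_snd (by intro hc; first
                    | exact hn1 (by linear_combination hc)
                    | exact hn1 (by linear_combination -hc)
                    | exact hn2 (by linear_combination hc)
                    | exact hn2 (by linear_combination -hc))
      have a0 : (strongBundle m n ℓ).Adj u (u.1, u.2 + 1) := adj_mk (v := (u.1, u.2 + 1)) (ne_of_snd (by intro hc; first
                  | exact hn1 (by linear_combination hc)
                  | exact hn1 (by linear_combination -hc)
                  | exact hn2 (by linear_combination hc)
                  | exact hn2 (by linear_combination -hc))) (Or.inl (Or.inl ⟨rfl, Or.inl rfl⟩))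
      have a1 : (strongBundle m n ℓ).Adj u (u.1, u.2 - 1) := adj_mk (v := (u.1, u.2 - 1)) (ne_of_snd (by intro hc; first
                  | exact hn1 (by linear_combination hc)
                  | exact hn1 (by linear_combination -hc)
                  | exact hn2 (by linear_combination hc)
                  | exact hn2 (by linear_combination -hc))) (Or.inl (Or.inl ⟨rfl, Or.inr rfl⟩))
      have a2 : (strongBundle m n ℓ).Adj u (⟨(u.1 : ℕ) + 1, by omega⟩, u.2 - 1) := adj_mk (ne_of_fst (show (u.1 : ℕ) ≠ (u.1 : ℕ) + 1 by omega)) (Or.inl (Or.inr (Or.inl ⟨rfl, Or.inl rfl⟩)))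
      have a3 : (strongBundle m n ℓ).Adj u (⟨(u.1 : ℕ) + 1, by omega⟩, u.2) := adj_mk (ne_of_fst (show (u.1 : ℕ) ≠ (u.1 : ℕ) + 1 by omega)) (Or.inl (Or.inr (Or.inl ⟨rfl, Or.inr (Or.inl rfl)⟩)))
      have a4 : (strongBundle m n ℓ).Adj u (⟨(u.1 : ℕ) + 1, by omega⟩, u.2 + 1) := adj_mk (ne_of_fst (show (u.1 : ℕ) ≠ (u.1 : ℕ) + 1 by omega)) (Or.inl (Or.inr (Or.inl ⟨rfl, Or.inr (Or.inr rfl)⟩)))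
      have a5 : (strongBundle m n ℓ).Adj u (⟨(u.1 : ℕ) - 1, by omega⟩, u.2 - 1) := adj_mk (ne_of_fst (show (u.1 : ℕ) ≠ (u.1 : ℕ) - 1 by omega)) (Or.inr (Or.inr (Or.inl ⟨show (u.1 : ℕ) - 1 + 1 = (u.1 : ℕ) by omega, Or.inr (Or.inr (by ring))⟩)))
      have a6 : (strongBundle m n ℓ).Adj u (⟨(u.1 : ℕ) - 1, by omega⟩, u.2) := adj_mk (ne_of_fst (show (u.1 : ℕ) ≠ (u.1 : ℕ) - 1 by omega)) (Or.inr (Or.inr (Or.inl ⟨show (u.1 : ℕ) - 1 + 1 = (u.1 : ℕ) by omega, Or.inr (Or.inl (by ring))⟩)))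
      have a7 : (strongBundle m n ℓ).Adj u (⟨(u.1 : ℕ) - 1, by omega⟩, u.2 + 1) := adj_mk (ne_of_fst (show (u.1 : ℕ) ≠ (u.1 : ℕ) - 1 by omega)) (Or.inr (Or.inr (Or.inl ⟨show (u.1 : ℕ) - 1 + 1 = (u.1 : ℕ) by omega, Or.inl (by ring)⟩)))
      refine ⟨fun i : Fin 8 => ([(u.1, u.2 + 1),
        (u.1, u.2 - 1),
        (⟨(u.1 : ℕ) + 1, by omega⟩, u.2 - 1),
        (⟨(u.1 : ℕ) + 1, by omega⟩, u.2),
        (⟨(u.1 : ℕ) + 1, by omega⟩, u.2 + 1),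
        (⟨(u.1 : ℕ) - 1, by omega⟩, u.2 - 1),
        (⟨(u.1 : ℕ) - 1, by omega⟩, u.2),
        (⟨(u.1 : ℕ) - 1, by omega⟩, u.2 + 1)] : List (Fin m × ZMod n)).get ⟨i.1, i.2⟩, ?_, ?_⟩
      · intro x y hxy
        have h' := (List.Nodup.get_inj_iff hnd).mp hxy
        exact Fin.ext (congrArg Fin.val h')
      · intro i
        fin_cases i
        · exact a0
        · exact a1
        · exact a2
        · exact a3
        · exact a4
        · exact a5
        · exact a6
        · exact a7


lemma dist_two_of_common {V : Type*} {G : SimpleGraph V} {u v w : V}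
    (h1 : G.Adj u v) (h2 : G.Adj u w) (hne : v ≠ w) (hna : ¬ G.Adj v w) : G.dist v w = 2 := by
  have hle : G.dist v w ≤ 2 := by
    have := SimpleGraph.dist_le ((h1.symm.toWalk).append h2.toWalk)
    simpa using this
  have h0 : G.dist v w ≠ 0 := by
    rw [SimpleGraph.dist_ne_zero_iff_ne_and_reachable]
    exact ⟨hne, (h1.symm.reachable).trans h2.reachable⟩
  have hn1 : G.dist v w ≠ 1 := fun hc => hna (SimpleGraph.dist_eq_one_iff_adj.mp hc)
  omega

lemma lb (hm : 3 ≤ m) (hn0 : 0 < n) (hn : 11 ∣ n) {f : Fin m × ZMod n → ℕ}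
    (hf : IsL21Labeling (strongBundle m n ℓ) f) : 10 ≤ spanOf f := by
  haveI : NeZero n := ⟨hn0.ne'⟩
  have hn11 : 11 ≤ n := Nat.le_of_dvd hn0 hn
  have hVne : Nonempty (Fin m × ZMod n) := ⟨⟨⟨0, by omega⟩, 0⟩⟩
  have hRne : (Set.range f).Nonempty := Set.range_nonempty f
  have hRfin : (Set.range f).Finite := Set.finite_range f
  set M := sSup (Set.range f) with hM
  set m0 := sInf (Set.range f) with hm0
  have hMmem : M ∈ Set.range f := hRne.csSup_mem hRfin
  have hm0mem : m0 ∈ Set.range f := Nat.sInf_mem hRne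
  have hub : ∀ u, f u ≤ M := fun u => le_csSup hRfin.bddAbove ⟨u, rfl⟩
  have hlbd : ∀ u, m0 ≤ f u := fun u => Nat.sInf_le ⟨u, rfl⟩
  by_contra hcon
  push_neg at hcon
  have hspan : M - m0 ≤ 9 := by
    have : spanOf f = M - m0 := rfl
    omega
  have hdist : ∀ u v w : Fin m × ZMod n, (strongBundle m n ℓ).Adj u v →
      (strongBundle m n ℓ).Adj u w → v ≠ w → f v ≠ f w := by
    intro u v w h1 h2 hne hEq
    by_cases hadj : (strongBundle m n ℓ).Adj v w
    · have := hf.1 v w hadj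
      rw [hEq] at this
      simp at this
    · have hd : (strongBundle m n ℓ).dist v w = 2 := dist_two_of_common h1 h2 hne hadj
      have := hf.2 v w hd
      rw [hEq] at this
      simp at this
  have hext : ∀ u : Fin m × ZMod n, f u = m0 ∨ f u = M := by
    intro u
    by_contra hmid
    push_neg at hmid
    have h1 : m0 < f u := lt_of_le_of_ne (hlbd u) (Ne.symm hmid.1)
    have h2 : f u < M := lt_of_le_of_ne (hub u) hmid.2
    obtain ⟨g, hginj, hgadj⟩ := eight_nbrs (ℓ := ℓ) hm hn11 u
    set T : Finset ℕ := (Finset.Icc m0 M) \ {f u - 1, f u, f u + 1} with hT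
    have hTcard : T.card ≤ 7 := by
      have hsub : ({f u - 1, f u, f u + 1} : Finset ℕ) ⊆ Finset.Icc m0 M := by
        intro x hx
        simp only [Finset.mem_insert, Finset.mem_singleton] at hx
        rw [Finset.mem_Icc]
        rcases hx with h | h | h <;> omega
      have h3 : ({f u - 1, f u, f u + 1} : Finset ℕ).card = 3 := by
        rw [Finset.card_insert_of_notMem (by
            simp only [Finset.mem_insert, Finset.mem_singleton]
            push_neg
            omega),
          Finset.card_insert_of_notMem (by
            simp only [Finset.mem_singleton]
            omega), Finset.card_singleton]
      rw [hT, Finset.card_sdiff_of_subset hsub, h3, Nat.card_Icc]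
      omega
    have hmap : ∀ i : Fin 8, f (g i) ∈ T := by
      intro i
      have hsep := hf.1 u (g i) (hgadj i)
      rw [hT, Finset.mem_sdiff, Finset.mem_Icc]
      refine ⟨⟨hlbd _, hub _⟩, ?_⟩
      simp only [Finset.mem_insert, Finset.mem_singleton]
      rcases le_abs.mp hsep with hs | hs <;> push_neg <;>
        refine ⟨by omega, by omega, by omega⟩
    obtain ⟨i, -, j, -, hij, hfeq⟩ :=
      Finset.exists_ne_map_eq_of_card_lt_of_maps_to
        (s := (Finset.univ : Finset (Fin 8))) (t := T)
        (by simpa using Nat.lt_of_le_of_lt hTcard (by norm_num)) (fun i _ => hmap i)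
    exact hdist u (g i) (g j) (hgadj i) (hgadj j) (fun hc => hij (hginj hc)) hfeq
  obtain ⟨u0, hu0⟩ := hm0mem
  obtain ⟨g, hginj, hgadj⟩ := eight_nbrs (ℓ := ℓ) hm hn11 u0
  have hval : ∀ i, f (g i) = M := by
    intro i
    rcases hext (g i) with h | h
    · exfalso
      have := hf.1 u0 (g i) (hgadj i)
      rw [hu0, h] at this
      simp at this
    · exact h
  have h01 : g 0 ≠ g 1 := fun hc => by simpa using hginj hc
  exact hdist u0 (g 0) (g 1) (hgadj 0) (hgadj 1) h01 (by rw [hval 0, hval 1])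

end L21A

theorem lambda_strongBundle_eq_ten (m n ℓ : ℕ) (hm : 3 ≤ m) (hn : 11 ∣ n) (hn0 : 0 < n)
    (hℓ : ℓ < n)
    (h : ∃ k : ℤ, ∃ a ∈ ({1, 2} : Set ℕ),
      (ℓ : ℤ) = (11 * k + (-1 : ℤ) ^ a * (4 * m)) % n ∨
      (ℓ : ℤ) = (11 * k + (-1 : ℤ) ^ a * (3 * m)) % n) :
    lambdaNumber (strongBundle m n ℓ) = 10 := by
  classical
  have h11z : ((11 : ℕ) : ZMod 11) = 0 := by decide
  have key : ∃ a b : ZMod 11, L21A.GoodCore a b ∧ a * (m : ZMod 11) = b * (ℓ : ZMod 11) := by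
    obtain ⟨k, a', ha', hcase⟩ := h
    have hmod : ∀ X : ℤ, (ℓ : ℤ) = X % n → ((ℓ : ℤ) : ZMod 11) = (X : ZMod 11) := by
      intro X hX
      have h11 : (11 : ℤ) ∣ (n : ℤ) := by exact_mod_cast Int.natCast_dvd_natCast.mpr hn
      have hmq : (ℓ : ℤ) % 11 = X % 11 := by rw [hX, Int.emod_emod_of_dvd _ h11]
      exact (ZMod.intCast_eq_intCast_iff _ _ _).mpr hmq
    simp only [Set.mem_insert_iff, Set.mem_singleton_iff] at ha'
    have hGP := L21A.good_pairs
    rcases ha' with rfl | rfl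
    · -- a' = 1 : sign -1
      rcases hcase with hC | hC
      · -- ℓ ≡ -4m : pair (2,5)
        have hL : (ℓ : ZMod 11) = 11 * (k : ZMod 11) - 4 * (m : ZMod 11) := by
          have := hmod _ hC
          push_cast at this
          linear_combination this
        refine ⟨2, 5, hGP.2.1, ?_⟩
        rw [hL]
        push_cast at h11z
        linear_combination (2 * (m : ZMod 11) - 5 * (k : ZMod 11)) * h11z
      · -- ℓ ≡ -3m : pair (5,2)
        have hL : (ℓ : ZMod 11) = 11 * (k : ZMod 11) - 3 * (m : ZMod 11) := by
          have := hmod _ hC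
          push_cast at this
          linear_combination this
        refine ⟨5, 2, hGP.2.2.2, ?_⟩
        rw [hL]
        push_cast at h11z
        linear_combination ((m : ZMod 11) - 2 * (k : ZMod 11)) * h11z
    · -- a' = 2 : sign +1
      rcases hcase with hC | hC
      · -- ℓ ≡ 4m : pair (9,5)
        have hL : (ℓ : ZMod 11) = 11 * (k : ZMod 11) + 4 * (m : ZMod 11) := by
          have := hmod _ hC
          push_cast at this
          linear_combination this
        refine ⟨9, 5, hGP.1, ?_⟩
        rw [hL]
        push_cast at h11z
        linear_combination (-(m : ZMod 11) - 5 * (k : ZMod 11)) * h11z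
      · -- ℓ ≡ 3m : pair (6,2)
        have hL : (ℓ : ZMod 11) = 11 * (k : ZMod 11) + 3 * (m : ZMod 11) := by
          have := hmod _ hC
          push_cast at this
          linear_combination this
        refine ⟨6, 2, hGP.2.2.1, ?_⟩
        rw [hL]
        push_cast at h11z
        linear_combination (-2 * (k : ZMod 11)) * h11z
  obtain ⟨a, b, hG, hseam⟩ := key
  obtain ⟨f, hf, hsp⟩ := L21A.ub hm hn0 hn hG hseam
  have h10 : spanOf f = 10 := le_antisymm hsp (L21A.lb hm hn0 hn hf)
  apply le_antisymm
  · exact Nat.sInf_le ⟨f, hf, h10⟩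
  · refine le_csInf ⟨10, f, hf, h10⟩ ?_
    rintro s ⟨f', hf', rfl⟩
    exact L21A.lb hm hn0 hn hf'
end

section
/- Let m ≥ 3 and let n be a positive multiple of 11, and let 0 ≤ ℓ < n. Suppose there exist an integer k and a ∈ {1,2} such that ℓ = (11k + (−1)^a·3m) mod n. Then the λ-number of the strong graph bundle C_m ⊠^{σ_ℓ} C_n is at most 10. -/
def fwdStep (m n ℓ : ℕ) (u v : Fin m × ZMod n) (d : ℤ) : Prop :=
  ((u.1 : ℕ) + 1 = (v.1 : ℕ) ∧ v.2 = u.2 + (d : ZMod n)) ∨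
  ((u.1 : ℕ) = m - 1 ∧ (v.1 : ℕ) = 0 ∧ v.2 = u.2 + (ℓ : ZMod n) + (d : ZMod n))

def lab {m n : ℕ} (c : ZMod 11) (hn : (11:ℕ) ∣ n) (p : Fin m × ZMod n) : ZMod 11 :=
  c * ((p.1 : ℕ) : ZMod 11) + 2 * ZMod.castHom hn (ZMod 11) p.2

lemma step_class {m n ℓ : ℕ} (c : ZMod 11) (hn : (11:ℕ) ∣ n)
    (hc : 2 * (ℓ : ZMod 11) = c * (m : ZMod 11)) (hm : 1 ≤ m)
    {u v : Fin m × ZMod n} (h : bundleStep m n ℓ u v) :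
    (∃ e : ℤ, (e = 1 ∨ e = -1) ∧ u.1 = v.1 ∧ v.2 = u.2 + (e : ZMod n) ∧
        lab c hn v = lab c hn u + 2 * ((e : ℤ) : ZMod 11)) ∨
    (∃ d : ℤ, (d = -1 ∨ d = 0 ∨ d = 1) ∧ fwdStep m n ℓ u v d ∧
        lab c hn v = lab c hn u + c + 2 * ((d : ℤ) : ZMod 11)) := by
  have hm1 : ((m - 1 : ℕ) : ZMod 11) = (m : ZMod 11) - 1 := by
    rw [Nat.cast_sub hm, Nat.cast_one]
  rcases h with ⟨h1, h2 | h2⟩ | ⟨h1, h2 | h2 | h2⟩ | ⟨h1, h0, h2 | h2 | h2⟩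
  · exact Or.inl ⟨1, Or.inl rfl, h1, by rw [h2]; push_cast; ring,
      by simp only [lab, ← h1, h2, map_add, map_one]; push_cast; ring⟩
  · exact Or.inl ⟨-1, Or.inr rfl, h1, by rw [h2]; push_cast; ring,
      by simp only [lab, ← h1, h2, map_sub, map_one]; push_cast; ring⟩
  · refine Or.inr ⟨-1, Or.inl rfl, Or.inl ⟨h1, by rw [h2]; push_cast; ring⟩, ?_⟩
    simp only [lab, ← h1, h2, map_sub, map_one]; push_cast; ring
  · refine Or.inr ⟨0, Or.inr (Or.inl rfl), Or.inl ⟨h1, by rw [h2]; push_cast; ring⟩, ?_⟩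
    simp only [lab, ← h1, h2]; push_cast; ring
  · refine Or.inr ⟨1, Or.inr (Or.inr rfl), Or.inl ⟨h1, by rw [h2]; push_cast; ring⟩, ?_⟩
    simp only [lab, ← h1, h2, map_add, map_one]; push_cast; ring
  · refine Or.inr ⟨-1, Or.inl rfl, Or.inr ⟨h1, h0, by rw [h2]; push_cast; ring⟩, ?_⟩
    simp only [lab, h1, h0, h2, map_sub, map_add, map_one, map_natCast, hm1]
    push_cast
    linear_combination hc
  · refine Or.inr ⟨0, Or.inr (Or.inl rfl), Or.inr ⟨h1, h0, by rw [h2]; push_cast; ring⟩, ?_⟩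
    simp only [lab, h1, h0, h2, map_add, map_natCast, hm1]
    push_cast
    linear_combination hc
  · refine Or.inr ⟨1, Or.inr (Or.inr rfl), Or.inr ⟨h1, h0, by rw [h2]; push_cast; ring⟩, ?_⟩
    simp only [lab, h1, h0, h2, map_add, map_one, map_natCast, hm1]
    push_cast
    linear_combination hc

lemma fwdStep_right_cancel {m n ℓ : ℕ} {u v x : Fin m × ZMod n} {d : ℤ}
    (h1 : fwdStep m n ℓ u x d) (h2 : fwdStep m n ℓ v x d) : u = v := by
  rcases h1 with ⟨ha, hb⟩ | ⟨ha, ha0, hb⟩ <;> rcases h2 with ⟨hc, hd⟩ | ⟨hc, hc0, hd⟩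
  · have h1 : u.1 = v.1 := Fin.val_injective (by omega)
    have h2 : u.2 = v.2 := by
      have := hb.symm.trans hd
      exact add_right_cancel this
    exact Prod.ext h1 h2
  · omega
  · omega
  · have h1 : u.1 = v.1 := Fin.val_injective (by omega)
    have h2 : u.2 = v.2 := by
      have := hb.symm.trans hd
      have := add_right_cancel this
      exact add_right_cancel this
    exact Prod.ext h1 h2

lemma fwdStep_left_cancel {m n ℓ : ℕ} {u v x : Fin m × ZMod n} {d : ℤ}
    (h1 : fwdStep m n ℓ x u d) (h2 : fwdStep m n ℓ x v d) : u = v := by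
  rcases h1 with ⟨ha, hb⟩ | ⟨ha, ha0, hb⟩ <;> rcases h2 with ⟨hc, hd⟩ | ⟨hc, hc0, hd⟩
  · exact Prod.ext (Fin.val_injective (by omega)) (hb.trans hd.symm)
  · have := u.1.isLt; omega
  · have := v.1.isLt; omega
  · exact Prod.ext (Fin.val_injective (by omega)) (hb.trans hd.symm)

lemma adj_class {m n ℓ : ℕ} (c : ZMod 11) (hn : (11:ℕ) ∣ n)
    (hc : 2 * (ℓ : ZMod 11) = c * (m : ZMod 11)) (hm : 1 ≤ m)
    {u v : Fin m × ZMod n} (h : bundleStep m n ℓ u v ∨ bundleStep m n ℓ v u) :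
    (∃ e : ℤ, (e = 1 ∨ e = -1) ∧ u.1 = v.1 ∧ v.2 = u.2 + (e : ZMod n) ∧
        lab c hn v = lab c hn u + 2 * ((e : ℤ) : ZMod 11)) ∨
    (∃ d : ℤ, (d = -1 ∨ d = 0 ∨ d = 1) ∧ fwdStep m n ℓ u v d ∧
        lab c hn v = lab c hn u + c + 2 * ((d : ℤ) : ZMod 11)) ∨
    (∃ d : ℤ, (d = -1 ∨ d = 0 ∨ d = 1) ∧ fwdStep m n ℓ v u d ∧
        lab c hn v = lab c hn u - (c + 2 * ((d : ℤ) : ZMod 11))) := by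
  rcases h with h | h
  · rcases step_class c hn hc hm h with h' | h'
    · exact Or.inl h'
    · exact Or.inr (Or.inl h')
  · rcases step_class c hn hc hm h with ⟨e, he, h1, h2, h3⟩ | ⟨d, hd, h1, h2⟩
    · refine Or.inl ⟨-e, ?_, h1.symm, ?_, ?_⟩
      · rcases he with rfl | rfl
        · exact Or.inr rfl
        · exact Or.inl (by norm_num)
      · rw [h2]; push_cast; ring
      · rw [h3]; push_cast; ring
    · exact Or.inr (Or.inr ⟨d, hd, h1, by rw [h2]; ring⟩)

lemma adj_val_bound {m n ℓ : ℕ} (c : ZMod 11) (hn : (11:ℕ) ∣ n)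
    (hc5 : c = 5 ∨ c = 6)
    (hc : 2 * (ℓ : ZMod 11) = c * (m : ZMod 11)) (hm : 1 ≤ m)
    {u v : Fin m × ZMod n} (h : bundleStep m n ℓ u v ∨ bundleStep m n ℓ v u) :
    2 ≤ (lab c hn v - lab c hn u).val ∧ (lab c hn v - lab c hn u).val ≤ 9 := by
  rcases adj_class c hn hc hm h with ⟨e, he, _, _, h3⟩ | ⟨d, hd, _, h3⟩ | ⟨d, hd, _, h3⟩
  · have hdiff : lab c hn v - lab c hn u = 2 * ((e : ℤ) : ZMod 11) := by rw [h3]; ring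
    rw [hdiff]
    rcases he with rfl | rfl <;> push_cast <;> decide
  · have hdiff : lab c hn v - lab c hn u = c + 2 * ((d : ℤ) : ZMod 11) := by rw [h3]; ring
    rw [hdiff]
    rcases hc5 with rfl | rfl <;> rcases hd with rfl | rfl | rfl <;> push_cast <;> decide
  · have hdiff : lab c hn v - lab c hn u = -(c + 2 * ((d : ℤ) : ZMod 11)) := by rw [h3]; ring
    rw [hdiff]
    rcases hc5 with rfl | rfl <;> rcases hd with rfl | rfl | rfl <;> push_cast <;> decide

lemma adj_cancel {m n ℓ : ℕ} (c : ZMod 11) (hn : (11:ℕ) ∣ n)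
    (hc5 : c = 5 ∨ c = 6)
    (hc : 2 * (ℓ : ZMod 11) = c * (m : ZMod 11)) (hm : 1 ≤ m)
    {u x v : Fin m × ZMod n}
    (h1 : bundleStep m n ℓ u x ∨ bundleStep m n ℓ x u)
    (h2 : bundleStep m n ℓ x v ∨ bundleStep m n ℓ v x)
    (hL : lab c hn u = lab c hn v) : u = v := by
  rcases adj_class c hn hc hm h1 with ⟨e1, he1, hf1, hs1, hl1⟩ | ⟨d1, hd1, hw1, hl1⟩ |
      ⟨d1, hd1, hw1, hl1⟩ <;>
    rcases adj_class c hn hc hm h2 with ⟨e2, he2, hf2, hs2, hl2⟩ | ⟨d2, hd2, hw2, hl2⟩ |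
      ⟨d2, hd2, hw2, hl2⟩
  · -- fiber, fiber
    have hz : 2 * ((e1 : ℤ) : ZMod 11) + 2 * ((e2 : ℤ) : ZMod 11) = 0 := by
      linear_combination -hl1 - hl2 - hL
    rcases he1 with rfl | rfl <;> rcases he2 with rfl | rfl <;>
      first
        | (push_cast at hz; exact absurd hz (by decide))
        | exact Prod.ext (hf1.trans hf2) (by rw [hs2, hs1]; push_cast; ring)
  · -- fiber, fwd
    have hz : c + 2 * ((e1 : ℤ) : ZMod 11) + 2 * ((d2 : ℤ) : ZMod 11) = 0 := by
      linear_combination -hl1 - hl2 - hL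
    rcases hc5 with rfl | rfl <;> rcases he1 with rfl | rfl <;>
      rcases hd2 with rfl | rfl | rfl <;> (push_cast at hz; exact absurd hz (by decide))
  · -- fiber, rev
    have hz : 2 * ((e1 : ℤ) : ZMod 11) - (c + 2 * ((d2 : ℤ) : ZMod 11)) = 0 := by
      linear_combination -hl1 - hl2 - hL
    rcases hc5 with rfl | rfl <;> rcases he1 with rfl | rfl <;>
      rcases hd2 with rfl | rfl | rfl <;> (push_cast at hz; exact absurd hz (by decide))
  · -- fwd, fiber
    have hz : c + 2 * ((d1 : ℤ) : ZMod 11) + 2 * ((e2 : ℤ) : ZMod 11) = 0 := by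
      linear_combination -hl1 - hl2 - hL
    rcases hc5 with rfl | rfl <;> rcases he2 with rfl | rfl <;>
      rcases hd1 with rfl | rfl | rfl <;> (push_cast at hz; exact absurd hz (by decide))
  · -- fwd, fwd
    have hz : c + c + 2 * ((d1 : ℤ) : ZMod 11) + 2 * ((d2 : ℤ) : ZMod 11) = 0 := by
      linear_combination -hl1 - hl2 - hL
    rcases hc5 with rfl | rfl <;> rcases hd1 with rfl | rfl | rfl <;>
      rcases hd2 with rfl | rfl | rfl <;> (push_cast at hz; exact absurd hz (by decide))
  · -- fwd, rev
    have hz : 2 * ((d1 : ℤ) : ZMod 11) - 2 * ((d2 : ℤ) : ZMod 11) = 0 := by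
      linear_combination -hl1 - hl2 - hL
    rcases hd1 with rfl | rfl | rfl <;> rcases hd2 with rfl | rfl | rfl <;>
      first
        | (push_cast at hz; exact absurd hz (by decide))
        | exact fwdStep_right_cancel hw1 hw2
  · -- rev, fiber
    have hz : 2 * ((e2 : ℤ) : ZMod 11) - (c + 2 * ((d1 : ℤ) : ZMod 11)) = 0 := by
      linear_combination -hl1 - hl2 - hL
    rcases hc5 with rfl | rfl <;> rcases he2 with rfl | rfl <;>
      rcases hd1 with rfl | rfl | rfl <;> (push_cast at hz; exact absurd hz (by decide))
  · -- rev, fwd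
    have hz : 2 * ((d2 : ℤ) : ZMod 11) - 2 * ((d1 : ℤ) : ZMod 11) = 0 := by
      linear_combination -hl1 - hl2 - hL
    rcases hd1 with rfl | rfl | rfl <;> rcases hd2 with rfl | rfl | rfl <;>
      first
        | (push_cast at hz; exact absurd hz (by decide))
        | exact fwdStep_left_cancel hw1 hw2
  · -- rev, rev
    have hz : -(c + 2 * ((d1 : ℤ) : ZMod 11)) - (c + 2 * ((d2 : ℤ) : ZMod 11)) = 0 := by
      linear_combination -hl1 - hl2 - hL
    rcases hc5 with rfl | rfl <;> rcases hd1 with rfl | rfl | rfl <;>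
      rcases hd2 with rfl | rfl | rfl <;> (push_cast at hz; exact absurd hz (by decide))

lemma main_aux {m n ℓ : ℕ} (c : ZMod 11) (hn : (11:ℕ) ∣ n) (hc5 : c = 5 ∨ c = 6)
    (hc : 2 * (ℓ : ZMod 11) = c * (m : ZMod 11)) (hm : 3 ≤ m) (hn0 : 0 < n) :
    lambdaNumber (strongBundle m n ℓ) ≤ 10 := by
  haveI : NeZero n := ⟨hn0.ne'⟩
  have hm1 : 1 ≤ m := by omega
  let f : Fin m × ZMod n → ℕ := fun p => (lab c hn p).val
  have hlab : IsL21Labeling (strongBundle m n ℓ) f := by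
    constructor
    · intro u v huv
      obtain ⟨-, hs⟩ := huv
      obtain ⟨hb1, hb2⟩ := adj_val_bound c hn hc5 hc hm1 hs
      have hx : (lab c hn u).val < 11 := ZMod.val_lt _
      have hy : (lab c hn v).val < 11 := ZMod.val_lt _
      have hdvd : (11:ℤ) ∣ (((lab c hn v).val : ℤ) - ((lab c hn u).val : ℤ)
          - ((lab c hn v - lab c hn u).val : ℤ)) := by
        apply (ZMod.intCast_zmod_eq_zero_iff_dvd _ _).mp
        push_cast
        simp only [ZMod.natCast_val, ZMod.cast_id]
        ring
      show 2 ≤ |((lab c hn u).val : ℤ) - ((lab c hn v).val : ℤ)|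
      rcases abs_cases (((lab c hn u).val : ℤ) - ((lab c hn v).val : ℤ)) with
        ⟨he, h0⟩ | ⟨he, h0⟩ <;> omega
    · intro u v hdist
      have hne : u ≠ v := by
        intro he; rw [he, SimpleGraph.dist_self] at hdist; omega
      obtain ⟨p, hp⟩ := SimpleGraph.exists_walk_of_dist_ne_zero (by rw [hdist]; omega :
        (strongBundle m n ℓ).dist u v ≠ 0)
      rw [hdist] at hp
      cases p with
      | nil => simp at hp
      | cons h q =>
        cases q with
        | nil => simp at hp
        | @cons _ x _ h' q' =>
          cases q' with
          | cons h'' q'' =>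
            simp [SimpleGraph.Walk.length_cons] at hp
          | nil =>
            have hfn : f u ≠ f v := by
              intro hEq
              have hl : lab c hn u = lab c hn v := ZMod.val_injective 11 hEq
              obtain ⟨-, hs1⟩ := h
              obtain ⟨-, hs2⟩ := h'
              exact hne (adj_cancel c hn hc5 hc hm1 hs1 hs2 hl)
            have hfi : ((f u : ℤ)) ≠ (f v : ℤ) := by exact_mod_cast hfn
            exact Int.one_le_abs (sub_ne_zero.mpr hfi)
  have hspan : spanOf f ≤ 10 := by
    have hub : sSup (Set.range f) ≤ 10 := by
      apply csSup_le ⟨f ⟨⟨0, by omega⟩, 0⟩, Set.mem_range_self _⟩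
      rintro s ⟨p, rfl⟩
      have := ZMod.val_lt (lab c hn p)
      show (lab c hn p).val ≤ 10
      omega
    exact le_trans (Nat.sub_le _ _) hub
  exact le_trans (Nat.sInf_le ⟨f, hlab, rfl⟩) hspan

theorem lambda_strongBundle_le_ten_three (m n ℓ : ℕ) (hm : 3 ≤ m) (hn : 11 ∣ n) (hn0 : 0 < n)
    (hℓ : ℓ < n)
    (h : ∃ k : ℤ, ∃ a ∈ ({1, 2} : Set ℕ),
      (ℓ : ℤ) = (11 * k + (-1 : ℤ) ^ a * (3 * m)) % n) :
    lambdaNumber (strongBundle m n ℓ) ≤ 10 := by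
  obtain ⟨k, a, ha, hleq⟩ := h
  have hmod : ((ℓ:ℤ) : ZMod 11) = (((11 * k + (-1:ℤ) ^ a * (3 * (m:ℤ))) : ℤ) : ZMod 11) := by
    rw [ZMod.intCast_eq_intCast_iff]
    show (ℓ : ℤ) % 11 = _ % 11
    rw [hleq]
    push_cast
    exact Int.emod_emod_of_dvd _ (by exact_mod_cast hn)
  have h110 : (11 : ZMod 11) = 0 := by decide
  have key : (ℓ : ZMod 11) = (-1) ^ a * (3 * (m : ZMod 11)) := by
    push_cast at hmod
    linear_combination hmod + (k : ZMod 11) * h110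
  simp only [Set.mem_insert_iff, Set.mem_singleton_iff] at ha
  rcases ha with rfl | rfl
  · refine main_aux (5 : ZMod 11) hn (Or.inl rfl) ?_ hm hn0
    linear_combination 2 * key - (m : ZMod 11) * h110
  · refine main_aux (6 : ZMod 11) hn (Or.inr rfl) ?_ hm hn0
    linear_combination 2 * key
end

section
/- Let m ≥ 3 and let n be a positive multiple of 11, and let 0 ≤ ℓ < n. Suppose there exists an integer k such that ℓ = (11k − 4m) mod n. Then the map f₁ defined on the vertices of the strong graph bundle C_m ⊠^{σ_ℓ} C_n by f₁(i,j) = (2i + 5j) mod 11 is an L(2,1)-labeling whose labels all lie in {0,1,…,10}. -/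
def Fz (m n : ℕ) (v : Fin m × ZMod n) : ZMod 11 :=
  2 * ((v.1 : ℕ) : ZMod 11) + 5 * ((v.2.val : ℕ) : ZMod 11)

lemma f_eq (m n : ℕ) (v : Fin m × ZMod n) :
    (2 * (v.1 : ℕ) + 5 * v.2.val) % 11 = (Fz m n v).val := by
  have h : Fz m n v = ((2 * (v.1 : ℕ) + 5 * v.2.val : ℕ) : ZMod 11) := by
    unfold Fz; push_cast; ring
  rw [h, ZMod.val_natCast]

lemma val_shift {x y c : ZMod 11} (h : y = x + c) : y.val = (x.val + c.val) % 11 := by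
  rw [h, ZMod.val_add]

def Fwd (m n ℓ : ℕ) (δ : ZMod n) (u v : Fin m × ZMod n) : Prop :=
  ((u.1 : ℕ) + 1 = (v.1 : ℕ) ∧ v.2 = u.2 + δ) ∨
  ((u.1 : ℕ) = m - 1 ∧ (v.1 : ℕ) = 0 ∧ v.2 = u.2 + (ℓ : ZMod n) + δ)

lemma FwdFwd1 {m n ℓ : ℕ} {δ : ZMod n} {u w v : Fin m × ZMod n}
    (h1 : Fwd m n ℓ δ u w) (h2 : Fwd m n ℓ δ v w) : v = u := by
  rcases h1 with ⟨a1, b1⟩ | ⟨a1, a1', b1⟩ <;> rcases h2 with ⟨a2, b2⟩ | ⟨a2, a2', b2⟩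
  · exact Prod.ext (Fin.ext (by omega)) (by rw [b1] at b2; exact (add_right_cancel b2).symm)
  · exfalso; omega
  · exfalso; omega
  · exact Prod.ext (Fin.ext (by omega))
      (by rw [b1] at b2; exact (add_right_cancel (add_right_cancel b2)).symm)

lemma FwdFwd2 {m n ℓ : ℕ} {δ : ZMod n} {u w v : Fin m × ZMod n}
    (h1 : Fwd m n ℓ δ w u) (h2 : Fwd m n ℓ δ w v) : v = u := by
  have hu := u.1.isLt
  have hv := v.1.isLt
  rcases h1 with ⟨a1, b1⟩ | ⟨a1, a1', b1⟩ <;> rcases h2 with ⟨a2, b2⟩ | ⟨a2, a2', b2⟩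
  · exact Prod.ext (Fin.ext (by omega)) (b2.trans b1.symm)
  · exfalso; omega
  · exfalso; omega
  · exact Prod.ext (Fin.ext (by omega)) (b2.trans b1.symm)

lemma adjF (m n ℓ : ℕ) [NeZero n] (hm : 3 ≤ m) (hn : 11 ∣ n)
    (hL : ((ℓ : ℕ) : ZMod 11) = -4 * ((m : ℕ) : ZMod 11)) (u v : Fin m × ZMod n)
    (h : (strongBundle m n ℓ).Adj u v) :
    ((Fz m n v).val = ((Fz m n u).val + 5) % 11 ∧ v.1 = u.1 ∧ v.2 = u.2 + 1) ∨
    ((Fz m n v).val = ((Fz m n u).val + 6) % 11 ∧ v.1 = u.1 ∧ v.2 = u.2 - 1) ∨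
    ((Fz m n v).val = ((Fz m n u).val + 2) % 11 ∧ Fwd m n ℓ 0 u v) ∨
    ((Fz m n v).val = ((Fz m n u).val + 7) % 11 ∧ Fwd m n ℓ 1 u v) ∨
    ((Fz m n v).val = ((Fz m n u).val + 8) % 11 ∧ Fwd m n ℓ (-1) u v) ∨
    ((Fz m n v).val = ((Fz m n u).val + 9) % 11 ∧ Fwd m n ℓ 0 v u) ∨
    ((Fz m n v).val = ((Fz m n u).val + 4) % 11 ∧ Fwd m n ℓ 1 v u) ∨
    ((Fz m n v).val = ((Fz m n u).val + 3) % 11 ∧ Fwd m n ℓ (-1) v u) := by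
  have key : ∀ x : ZMod n, ((x.val : ℕ) : ZMod 11) = ZMod.castHom hn (ZMod 11) x := fun x => by
    rw [ZMod.natCast_val, ZMod.castHom_apply]
  set φ := ZMod.castHom hn (ZMod 11) with hφ
  have hFz : ∀ x : Fin m × ZMod n, Fz m n x = 2 * ((x.1 : ℕ) : ZMod 11) + 5 * φ x.2 :=
    fun x => by rw [Fz, key]
  have h11 : (11 : ZMod 11) = 0 := by decide
  have h1m : 1 ≤ m := by omega
  obtain ⟨hne, hstep | hstep⟩ := h
  · rcases hstep with ⟨e, h2 | h2⟩ | ⟨e, h2 | h2 | h2⟩ | ⟨e, e', h2 | h2 | h2⟩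
    · -- fiber +1
      have hz : Fz m n v = Fz m n u + (5 : ZMod 11) := by
        rw [hFz, hFz, ← e, h2, map_add, map_one]; ring
      exact Or.inl ⟨by rw [val_shift hz]; rfl, e.symm, h2⟩
    · -- fiber -1
      have hz : Fz m n v = Fz m n u + (6 : ZMod 11) := by
        rw [hFz, hFz, ← e, h2, map_sub, map_one]; linear_combination -h11
      exact Or.inr (Or.inl ⟨by rw [val_shift hz]; rfl, e.symm, h2⟩)
    · -- interior forward, δ = -1
      have hc : ((v.1 : ℕ) : ZMod 11) = ((u.1 : ℕ) : ZMod 11) + 1 := by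
        rw [← e]; push_cast; ring
      have hz : Fz m n v = Fz m n u + (8 : ZMod 11) := by
        rw [hFz, hFz, hc, h2, map_sub, map_one]; linear_combination -h11
      exact Or.inr (Or.inr (Or.inr (Or.inr (Or.inl ⟨by rw [val_shift hz]; rfl,
        Or.inl ⟨e, by rw [h2, sub_eq_add_neg]⟩⟩))))
    · -- interior forward, δ = 0
      have hc : ((v.1 : ℕ) : ZMod 11) = ((u.1 : ℕ) : ZMod 11) + 1 := by
        rw [← e]; push_cast; ring
      have hz : Fz m n v = Fz m n u + (2 : ZMod 11) := by
        rw [hFz, hFz, hc, h2]; ring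
      exact Or.inr (Or.inr (Or.inl ⟨by rw [val_shift hz]; rfl,
        Or.inl ⟨e, by rw [h2, add_zero]⟩⟩))
    · -- interior forward, δ = 1
      have hc : ((v.1 : ℕ) : ZMod 11) = ((u.1 : ℕ) : ZMod 11) + 1 := by
        rw [← e]; push_cast; ring
      have hz : Fz m n v = Fz m n u + (7 : ZMod 11) := by
        rw [hFz, hFz, hc, h2, map_add, map_one]; ring
      exact Or.inr (Or.inr (Or.inr (Or.inl ⟨by rw [val_shift hz]; rfl,
        Or.inl ⟨e, h2⟩⟩)))
    · -- seam forward, δ = -1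
      have hc1 : ((u.1 : ℕ) : ZMod 11) = ((m : ℕ) : ZMod 11) - 1 := by
        rw [e, Nat.cast_sub h1m, Nat.cast_one]
      have hc2 : ((v.1 : ℕ) : ZMod 11) = 0 := by rw [e', Nat.cast_zero]
      have hz : Fz m n v = Fz m n u + (8 : ZMod 11) := by
        rw [hFz, hFz, hc1, hc2, h2, map_sub, map_add, map_one, map_natCast, hL]
        linear_combination (-2 * ((m : ℕ) : ZMod 11) - 1) * h11
      exact Or.inr (Or.inr (Or.inr (Or.inr (Or.inl ⟨by rw [val_shift hz]; rfl,
        Or.inr ⟨e, e', by rw [h2, sub_eq_add_neg]⟩⟩))))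
    · -- seam forward, δ = 0
      have hc1 : ((u.1 : ℕ) : ZMod 11) = ((m : ℕ) : ZMod 11) - 1 := by
        rw [e, Nat.cast_sub h1m, Nat.cast_one]
      have hc2 : ((v.1 : ℕ) : ZMod 11) = 0 := by rw [e', Nat.cast_zero]
      have hz : Fz m n v = Fz m n u + (2 : ZMod 11) := by
        rw [hFz, hFz, hc1, hc2, h2, map_add, map_natCast, hL]
        linear_combination (-2 * ((m : ℕ) : ZMod 11)) * h11
      exact Or.inr (Or.inr (Or.inl ⟨by rw [val_shift hz]; rfl,
        Or.inr ⟨e, e', by rw [h2, add_zero]⟩⟩))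
    · -- seam forward, δ = 1
      have hc1 : ((u.1 : ℕ) : ZMod 11) = ((m : ℕ) : ZMod 11) - 1 := by
        rw [e, Nat.cast_sub h1m, Nat.cast_one]
      have hc2 : ((v.1 : ℕ) : ZMod 11) = 0 := by rw [e', Nat.cast_zero]
      have hz : Fz m n v = Fz m n u + (7 : ZMod 11) := by
        rw [hFz, hFz, hc1, hc2, h2, map_add, map_add, map_one, map_natCast, hL]
        linear_combination (-2 * ((m : ℕ) : ZMod 11)) * h11
      exact Or.inr (Or.inr (Or.inr (Or.inl ⟨by rw [val_shift hz]; rfl,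
        Or.inr ⟨e, e', h2⟩⟩)))
  · rcases hstep with ⟨e, h2 | h2⟩ | ⟨e, h2 | h2 | h2⟩ | ⟨e, e', h2 | h2 | h2⟩
    · -- fiber backward +1 : u.2 = v.2 + 1, so v.2 = u.2 - 1
      have hz : Fz m n v = Fz m n u + (6 : ZMod 11) := by
        rw [hFz, hFz, ← e, h2, map_add, map_one]; linear_combination -h11
      exact Or.inr (Or.inl ⟨by rw [val_shift hz]; rfl, e,
        by rw [h2, add_sub_cancel_right]⟩)
    · -- fiber backward -1 : u.2 = v.2 - 1, so v.2 = u.2 + 1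
      have hz : Fz m n v = Fz m n u + (5 : ZMod 11) := by
        rw [hFz, hFz, ← e, h2, map_sub, map_one]; ring
      exact Or.inl ⟨by rw [val_shift hz]; rfl, e, by rw [h2, sub_add_cancel]⟩
    · -- interior backward, δ = -1 : c = 3
      have hc : ((u.1 : ℕ) : ZMod 11) = ((v.1 : ℕ) : ZMod 11) + 1 := by
        rw [← e]; push_cast; ring
      have hz : Fz m n v = Fz m n u + (3 : ZMod 11) := by
        rw [hFz, hFz, hc, h2, map_sub, map_one]; ring
      exact Or.inr (Or.inr (Or.inr (Or.inr (Or.inr (Or.inr (Or.inr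
        ⟨by rw [val_shift hz]; rfl, Or.inl ⟨e, by rw [h2, sub_eq_add_neg]⟩⟩))))))
    · -- interior backward, δ = 0 : c = 9
      have hc : ((u.1 : ℕ) : ZMod 11) = ((v.1 : ℕ) : ZMod 11) + 1 := by
        rw [← e]; push_cast; ring
      have hz : Fz m n v = Fz m n u + (9 : ZMod 11) := by
        rw [hFz, hFz, hc, h2]; linear_combination -h11
      exact Or.inr (Or.inr (Or.inr (Or.inr (Or.inr (Or.inl
        ⟨by rw [val_shift hz]; rfl, Or.inl ⟨e, by rw [h2, add_zero]⟩⟩)))))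
    · -- interior backward, δ = 1 : c = 4
      have hc : ((u.1 : ℕ) : ZMod 11) = ((v.1 : ℕ) : ZMod 11) + 1 := by
        rw [← e]; push_cast; ring
      have hz : Fz m n v = Fz m n u + (4 : ZMod 11) := by
        rw [hFz, hFz, hc, h2, map_add, map_one]; linear_combination -h11
      exact Or.inr (Or.inr (Or.inr (Or.inr (Or.inr (Or.inr (Or.inl
        ⟨by rw [val_shift hz]; rfl, Or.inl ⟨e, h2⟩⟩))))))
    · -- seam backward, δ = -1 : c = 3
      have hc1 : ((v.1 : ℕ) : ZMod 11) = ((m : ℕ) : ZMod 11) - 1 := by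
        rw [e, Nat.cast_sub h1m, Nat.cast_one]
      have hc2 : ((u.1 : ℕ) : ZMod 11) = 0 := by rw [e', Nat.cast_zero]
      have hz : Fz m n v = Fz m n u + (3 : ZMod 11) := by
        rw [hFz, hFz, hc1, hc2, h2, map_sub, map_add, map_one, map_natCast, hL]
        linear_combination (2 * ((m : ℕ) : ZMod 11)) * h11
      exact Or.inr (Or.inr (Or.inr (Or.inr (Or.inr (Or.inr (Or.inr
        ⟨by rw [val_shift hz]; rfl, Or.inr ⟨e, e', by rw [h2, sub_eq_add_neg]⟩⟩))))))
    · -- seam backward, δ = 0 : c = 9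
      have hc1 : ((v.1 : ℕ) : ZMod 11) = ((m : ℕ) : ZMod 11) - 1 := by
        rw [e, Nat.cast_sub h1m, Nat.cast_one]
      have hc2 : ((u.1 : ℕ) : ZMod 11) = 0 := by rw [e', Nat.cast_zero]
      have hz : Fz m n v = Fz m n u + (9 : ZMod 11) := by
        rw [hFz, hFz, hc1, hc2, h2, map_add, map_natCast, hL]
        linear_combination (2 * ((m : ℕ) : ZMod 11) - 1) * h11
      exact Or.inr (Or.inr (Or.inr (Or.inr (Or.inr (Or.inl
        ⟨by rw [val_shift hz]; rfl, Or.inr ⟨e, e', by rw [h2, add_zero]⟩⟩)))))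
    · -- seam backward, δ = 1 : c = 4
      have hc1 : ((v.1 : ℕ) : ZMod 11) = ((m : ℕ) : ZMod 11) - 1 := by
        rw [e, Nat.cast_sub h1m, Nat.cast_one]
      have hc2 : ((u.1 : ℕ) : ZMod 11) = 0 := by rw [e', Nat.cast_zero]
      have hz : Fz m n v = Fz m n u + (4 : ZMod 11) := by
        rw [hFz, hFz, hc1, hc2, h2, map_add, map_add, map_one, map_natCast, hL]
        linear_combination (2 * ((m : ℕ) : ZMod 11) - 1) * h11
      exact Or.inr (Or.inr (Or.inr (Or.inr (Or.inr (Or.inr (Or.inl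
        ⟨by rw [val_shift hz]; rfl, Or.inr ⟨e, e', h2⟩⟩))))))

lemma two_step (m n ℓ : ℕ) [NeZero n] (hm : 3 ≤ m) (hn : 11 ∣ n)
    (hL : ((ℓ : ℕ) : ZMod 11) = -4 * ((m : ℕ) : ZMod 11)) (u w v : Fin m × ZMod n)
    (h1 : (strongBundle m n ℓ).Adj u w) (h2 : (strongBundle m n ℓ).Adj w v)
    (hg : (Fz m n v).val = (Fz m n u).val) : v = u := by
  have bu := ZMod.val_lt (Fz m n u)
  have bw := ZMod.val_lt (Fz m n w)
  have bv := ZMod.val_lt (Fz m n v)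
  rcases adjF m n ℓ hm hn hL u w h1 with
    ⟨e1, s1, t1⟩ | ⟨e1, s1, t1⟩ | ⟨e1, s1⟩ | ⟨e1, s1⟩ | ⟨e1, s1⟩ | ⟨e1, s1⟩ | ⟨e1, s1⟩ | ⟨e1, s1⟩ <;>
  rcases adjF m n ℓ hm hn hL w v h2 with
    ⟨e2, s2, t2⟩ | ⟨e2, s2, t2⟩ | ⟨e2, s2⟩ | ⟨e2, s2⟩ | ⟨e2, s2⟩ | ⟨e2, s2⟩ | ⟨e2, s2⟩ | ⟨e2, s2⟩ <;>
  first
    | (exfalso; omega)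
    | (exact FwdFwd1 s1 s2)
    | (exact FwdFwd2 s1 s2)
    | (exact Prod.ext (s2.trans s1) (by rw [t2, t1, add_sub_cancel_right]))
    | (exact Prod.ext (s2.trans s1) (by rw [t2, t1, sub_add_cancel]))

theorem f1_isL21Labeling (m n ℓ : ℕ) (hm : 3 ≤ m) (hn : 11 ∣ n) (hn0 : 0 < n) (hℓ : ℓ < n)
    (h : ∃ k : ℤ, (ℓ : ℤ) = (11 * k - 4 * m) % n) :
    IsL21Labeling (strongBundle m n ℓ)
      (fun v => (2 * (v.1 : ℕ) + 5 * v.2.val) % 11) ∧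
    ∀ v : Fin m × ZMod n, (2 * (v.1 : ℕ) + 5 * v.2.val) % 11 ≤ 10 := by
  haveI : NeZero n := ⟨hn0.ne'⟩
  obtain ⟨k, hk⟩ := h
  have hL : ((ℓ : ℕ) : ZMod 11) = -4 * ((m : ℕ) : ZMod 11) := by
    have h0 : ((n : ℕ) : ZMod 11) = 0 := (ZMod.natCast_eq_zero_iff n 11).mpr hn
    have hc := congrArg (fun z : ℤ => (z : ZMod 11)) hk
    simp only [Int.emod_def] at hc
    push_cast at hc
    rw [h0] at hc
    have h11 : ((11 : ℤ) : ZMod 11) = 0 := by decide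
    push_cast at h11
    linear_combination hc + (k : ZMod 11) * h11
  refine ⟨⟨?_, ?_⟩, ?_⟩
  · intro u v hadj
    simp only [f_eq m n]
    have h8 := adjF m n ℓ hm hn hL u v hadj
    have bu := ZMod.val_lt (Fz m n u)
    have bv := ZMod.val_lt (Fz m n v)
    rw [le_abs]
    rcases h8 with ⟨e, -⟩ | ⟨e, -⟩ | ⟨e, -⟩ | ⟨e, -⟩ | ⟨e, -⟩ | ⟨e, -⟩ | ⟨e, -⟩ | ⟨e, -⟩ <;> omega
  · intro u v hd
    have hne : u ≠ v := by
      rintro rfl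
      rw [SimpleGraph.dist_self] at hd
      exact absurd hd (by norm_num)
    obtain ⟨p, hp⟩ := SimpleGraph.exists_walk_of_dist_ne_zero (by omega : (strongBundle m n ℓ).dist u v ≠ 0)
    rw [hd] at hp
    simp only [f_eq m n]
    cases p with
    | nil => simp at hp
    | cons h1 q =>
      cases q with
      | nil => simp at hp
      | cons h2 r =>
        cases r with
        | cons h3 s => simp at hp
        | nil =>
          have hne' : (Fz m n v).val ≠ (Fz m n u).val := by
            intro heq
            exact hne (two_step m n ℓ hm hn hL u _ v h1 h2 heq).symm
          rw [le_abs]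
          omega
  · intro v
    omega
end

section
/- Let m ≥ 3 and let n be a positive multiple of 11, and let 0 ≤ ℓ < n. Suppose there exists an integer k such that ℓ = (11k + 4m) mod n. Then the map f₂ defined on the vertices of the strong graph bundle C_m ⊠^{σ_ℓ} C_n by f₂(i,j) = (2i + 6j) mod 11 is an L(2,1)-labeling whose labels all lie in {0,1,…,10}. -/
namespace F2Aux

/-- forward-type step (base or seam) with fiber shift `e`. -/
def Fwd (m n ℓ : ℕ) (u v : Fin m × ZMod n) (e : ℤ) : Prop :=
  ((u.1 : ℕ) + 1 = (v.1 : ℕ) ∧ v.2 = u.2 + (e : ZMod n)) ∨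
  ((u.1 : ℕ) = m - 1 ∧ (v.1 : ℕ) = 0 ∧ v.2 = u.2 + (ℓ : ZMod n) + (e : ZMod n))

/-- the mod-11 invariant. -/
def F (m n : ℕ) (v : Fin m × ZMod n) : ZMod 11 :=
  2 * ((v.1 : ℕ) : ZMod 11) + 6 * ((v.2.val : ℕ) : ZMod 11)

variable {m n ℓ : ℕ}

lemma step_cases {u v : Fin m × ZMod n}
    (h : bundleStep m n ℓ u v ∨ bundleStep m n ℓ v u) :
    (u.1 = v.1 ∧ v.2 = u.2 + 1) ∨ (u.1 = v.1 ∧ v.2 = u.2 - 1) ∨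
    Fwd m n ℓ u v 0 ∨ Fwd m n ℓ u v 1 ∨ Fwd m n ℓ u v (-1) ∨
    Fwd m n ℓ v u 0 ∨ Fwd m n ℓ v u 1 ∨ Fwd m n ℓ v u (-1) := by
  have hc0 : ((0:ℤ) : ZMod n) = 0 := by push_cast; ring
  have hc1 : ((1:ℤ) : ZMod n) = 1 := by push_cast; ring
  have hcm : ((-1:ℤ) : ZMod n) = -1 := by push_cast; ring
  unfold bundleStep Fwd at *
  simp only [hc0, hc1, hcm, add_zero] at *
  rcases h with (⟨h1,h2|h2⟩|⟨h1,h2|h2|h2⟩|⟨h1,h1',h2|h2|h2⟩)|(⟨h1,h2|h2⟩|⟨h1,h2|h2|h2⟩|⟨h1,h1',h2|h2|h2⟩)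
  · exact Or.inl ⟨h1, h2⟩
  · exact Or.inr (Or.inl ⟨h1, h2⟩)
  · exact Or.inr (Or.inr (Or.inr (Or.inr (Or.inl (Or.inl ⟨h1, by rw [h2]; ring⟩)))))
  · exact Or.inr (Or.inr (Or.inl (Or.inl ⟨h1, h2⟩)))
  · exact Or.inr (Or.inr (Or.inr (Or.inl (Or.inl ⟨h1, h2⟩))))
  · exact Or.inr (Or.inr (Or.inr (Or.inr (Or.inl (Or.inr ⟨h1, h1', by rw [h2]; ring⟩)))))
  · exact Or.inr (Or.inr (Or.inl (Or.inr ⟨h1, h1', h2⟩)))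
  · exact Or.inr (Or.inr (Or.inr (Or.inl (Or.inr ⟨h1, h1', h2⟩))))
  · exact Or.inr (Or.inl ⟨h1.symm, by rw [h2]; ring⟩)
  · exact Or.inl ⟨h1.symm, by rw [h2]; ring⟩
  · exact Or.inr (Or.inr (Or.inr (Or.inr (Or.inr (Or.inr (Or.inr (Or.inl ⟨h1, by rw [h2]; ring⟩)))))))
  · exact Or.inr (Or.inr (Or.inr (Or.inr (Or.inr (Or.inl (Or.inl ⟨h1, h2⟩))))))
  · exact Or.inr (Or.inr (Or.inr (Or.inr (Or.inr (Or.inr (Or.inl (Or.inl ⟨h1, h2⟩)))))))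
  · exact Or.inr (Or.inr (Or.inr (Or.inr (Or.inr (Or.inr (Or.inr (Or.inr ⟨h1, h1', by rw [h2]; ring⟩)))))))
  · exact Or.inr (Or.inr (Or.inr (Or.inr (Or.inr (Or.inl (Or.inr ⟨h1, h1', h2⟩))))))
  · exact Or.inr (Or.inr (Or.inr (Or.inr (Or.inr (Or.inr (Or.inl (Or.inr ⟨h1, h1', h2⟩)))))))

section
variable (hm : 3 ≤ m) (hn0 : 0 < n) (hdvd : 11 ∣ n) (hl : (ℓ : ZMod 11) = 4 * m)

include hn0 hdvd in
lemma val_cast (j : ZMod n) : ((j.val : ℕ) : ZMod 11) = ZMod.castHom hdvd (ZMod 11) j := by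
  haveI : NeZero n := ⟨hn0.ne'⟩
  rw [ZMod.natCast_val, ZMod.castHom_apply]

include hm hn0 hdvd hl in
lemma F_step {u v : Fin m × ZMod n} {e : ℤ} (h : Fwd m n ℓ u v e) :
    F m n v = F m n u + 2 + 6 * (e : ZMod 11) := by
  set g := ZMod.castHom hdvd (ZMod 11) with hg
  unfold F
  rw [val_cast hn0 hdvd, val_cast hn0 hdvd, ← hg]
  rcases h with ⟨h1, h2⟩ | ⟨h1, h1', h2⟩
  · rw [h2, map_add, map_intCast, ← h1]
    push_cast
    ring
  · rw [h2, h1, h1']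
    have hm1 : ((m - 1 : ℕ) : ZMod 11) = (m : ZMod 11) - 1 := by
      have : (1:ℕ) ≤ m := by omega
      push_cast [Nat.cast_sub this]
      ring
    rw [hm1, map_add, map_add, map_intCast, map_natCast]
    push_cast
    rw [hl]
    have h22 : (22 : ZMod 11) = 0 := by decide
    linear_combination ((m : ZMod 11)) * h22
end

end F2Aux


namespace F2Aux

variable {m n ℓ : ℕ}

section
variable (hm : 3 ≤ m) (hn0 : 0 < n) (hdvd : 11 ∣ n) (hl : (ℓ : ZMod 11) = 4 * m)

lemma h11 : (11 : ZMod 11) = 0 := by decide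

include hn0 hdvd in
lemma d6 {u v : Fin m × ZMod n} (c : u.1 = v.1 ∧ v.2 = u.2 + 1) :
    F m n v = F m n u + 6 := by
  unfold F
  rw [val_cast hn0 hdvd, val_cast hn0 hdvd, ← c.1, c.2, map_add, map_one]
  ring

include hn0 hdvd in
lemma d5 {u v : Fin m × ZMod n} (c : u.1 = v.1 ∧ v.2 = u.2 - 1) :
    F m n v = F m n u + 5 := by
  unfold F
  rw [val_cast hn0 hdvd, val_cast hn0 hdvd, ← c.1, c.2, map_sub, map_one]
  linear_combination -h11

include hm hn0 hdvd hl in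
lemma e2 {u v : Fin m × ZMod n} (c : Fwd m n ℓ u v 0) : F m n v = F m n u + 2 := by
  have h := F_step hm hn0 hdvd hl c
  push_cast at h
  rw [h]; ring

include hm hn0 hdvd hl in
lemma e8 {u v : Fin m × ZMod n} (c : Fwd m n ℓ u v 1) : F m n v = F m n u + 8 := by
  have h := F_step hm hn0 hdvd hl c
  push_cast at h
  rw [h]; ring

include hm hn0 hdvd hl in
lemma e7 {u v : Fin m × ZMod n} (c : Fwd m n ℓ u v (-1)) : F m n v = F m n u + 7 := by
  have h := F_step hm hn0 hdvd hl c
  push_cast at h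
  rw [h]
  linear_combination -h11

end

lemma keqA {a b c K1 K2 : ZMod 11} (h1 : b = a + K1) (h2 : c = b + K2) (h3 : a = c) :
    K1 + K2 = 0 := by subst h1 h2; linear_combination -h3

lemma keqB {a b c K1 K2 : ZMod 11} (h1 : b = a + K1) (h2 : b = c + K2) (h3 : a = c) :
    K1 - K2 = 0 := by subst h1 h3; linear_combination h2

lemma keqC {a b c K1 K2 : ZMod 11} (h1 : a = b + K1) (h2 : c = b + K2) (h3 : a = c) :
    K1 - K2 = 0 := by subst h3; rw [h1] at h2; linear_combination h2

lemma keqD {a b c K1 K2 : ZMod 11} (h1 : a = b + K1) (h2 : b = c + K2) (h3 : a = c) :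
    K1 + K2 = 0 := by subst h2 h3; linear_combination -h1

lemma fib_cancel1 {u w v : Fin m × ZMod n}
    (c1 : u.1 = w.1 ∧ w.2 = u.2 + 1) (c2 : w.1 = v.1 ∧ v.2 = w.2 - 1) : u = v := by
  obtain ⟨u1, u2⟩ := u; obtain ⟨w1, w2⟩ := w; obtain ⟨v1, v2⟩ := v
  simp only [Prod.mk.injEq] at *
  constructor
  · rw [c1.1, c2.1]
  · rw [c2.2, c1.2]; ring

lemma fib_cancel2 {u w v : Fin m × ZMod n}
    (c1 : u.1 = w.1 ∧ w.2 = u.2 - 1) (c2 : w.1 = v.1 ∧ v.2 = w.2 + 1) : u = v := by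
  obtain ⟨u1, u2⟩ := u; obtain ⟨w1, w2⟩ := w; obtain ⟨v1, v2⟩ := v
  simp only [Prod.mk.injEq] at *
  constructor
  · rw [c1.1, c2.1]
  · rw [c2.2, c1.2]; ring

lemma fwd_cancel {u w v : Fin m × ZMod n} {e : ℤ}
    (c1 : Fwd m n ℓ u w e) (c2 : Fwd m n ℓ v w e) : u = v := by
  obtain ⟨u1, u2⟩ := u; obtain ⟨w1, w2⟩ := w; obtain ⟨v1, v2⟩ := v
  unfold Fwd at *
  simp only [Prod.mk.injEq] at *
  rcases c1 with ⟨h1, h2⟩ | ⟨h1, h1', h2⟩ <;> rcases c2 with ⟨g1, g2⟩ | ⟨g1, g1', g2⟩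
  · refine ⟨Fin.ext (by omega), ?_⟩
    rw [h2] at g2
    exact add_left_injective _ g2
  · exact absurd g1' (by omega)
  · exact absurd h1' (by omega)
  · refine ⟨Fin.ext (by omega), ?_⟩
    rw [h2] at g2
    have h3 := add_left_injective _ g2
    exact add_left_injective _ h3

lemma fwd_cancel' {u w v : Fin m × ZMod n} {e : ℤ}
    (c1 : Fwd m n ℓ w u e) (c2 : Fwd m n ℓ w v e) : u = v := by
  obtain ⟨u1, u2⟩ := u; obtain ⟨w1, w2⟩ := w; obtain ⟨v1, v2⟩ := v
  unfold Fwd at *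
  simp only [Prod.mk.injEq] at *
  have hu := u1.isLt
  have hv := v1.isLt
  rcases c1 with ⟨h1, h2⟩ | ⟨h1, h1', h2⟩ <;> rcases c2 with ⟨g1, g2⟩ | ⟨g1, g1', g2⟩
  · exact ⟨Fin.ext (by omega), by rw [h2, g2]⟩
  · exact absurd g1 (by omega)
  · exact absurd g1 (by omega)
  · exact ⟨Fin.ext (by omega), by rw [h2, g2]⟩

section
variable (hm : 3 ≤ m) (hn0 : 0 < n) (hdvd : 11 ∣ n) (hl : (ℓ : ZMod 11) = 4 * m)

include hm hn0 hdvd hl in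
lemma two_step {u w v : Fin m × ZMod n}
    (h1 : bundleStep m n ℓ u w ∨ bundleStep m n ℓ w u)
    (h2 : bundleStep m n ℓ w v ∨ bundleStep m n ℓ v w)
    (hF : F m n u = F m n v) : u = v := by
  rcases step_cases h1 with c1|c1|c1|c1|c1|c1|c1|c1 <;>
    rcases step_cases h2 with c2|c2|c2|c2|c2|c2|c2|c2 <;>
      first
      | exact fib_cancel1 c1 c2
      | exact fib_cancel2 c1 c2
      | exact fwd_cancel c1 c2
      | exact fwd_cancel' c1 c2
      | ((first
          | have k1 := d6 hn0 hdvd c1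
          | have k1 := d5 hn0 hdvd c1
          | have k1 := e2 hm hn0 hdvd hl c1
          | have k1 := e8 hm hn0 hdvd hl c1
          | have k1 := e7 hm hn0 hdvd hl c1);
         (first
          | have k2 := d6 hn0 hdvd c2
          | have k2 := d5 hn0 hdvd c2
          | have k2 := e2 hm hn0 hdvd hl c2
          | have k2 := e8 hm hn0 hdvd hl c2
          | have k2 := e7 hm hn0 hdvd hl c2);
         (first
          | exact absurd (keqA k1 k2 hF) (by decide)
          | exact absurd (keqB k1 k2 hF) (by decide)
          | exact absurd (keqC k1 k2 hF) (by decide)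
          | exact absurd (keqD k1 k2 hF) (by decide)))

end

end F2Aux


namespace F2Aux

variable {m n ℓ : ℕ}

lemma natBridge {a b : ℕ} {K : ZMod 11} (ha : a < 11) (hb : b < 11)
    (hab : (b : ZMod 11) = (a : ZMod 11) + K) (h0 : K ≠ 0) (h1 : K ≠ 1) (h10 : K ≠ 10) :
    2 ≤ |(a : ℤ) - (b : ℤ)| := by
  by_contra hc
  push_neg at hc
  obtain ⟨hc1, hc2⟩ := abs_lt.mp hc
  have h3 : b = a ∨ b = a + 1 ∨ a = b + 1 := by omega
  have h11 : (11 : ZMod 11) = 0 := by decide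
  rcases h3 with h | h | h
  · subst h
    exact h0 (by linear_combination -hab)
  · subst h
    push_cast at hab
    exact h1 (by linear_combination -hab)
  · subst h
    push_cast at hab
    exact h10 (by linear_combination -hab - h11)

lemma natBridge1 {a b : ℕ} (ha : a < 11) (hb : b < 11)
    (hab : (a : ZMod 11) ≠ (b : ZMod 11)) :
    1 ≤ |(a : ℤ) - (b : ℤ)| := by
  by_contra hc
  push_neg at hc
  obtain ⟨hc1, hc2⟩ := abs_lt.mp hc
  have : a = b := by omega
  exact hab (by rw [this])

lemma cast_label (v : Fin m × ZMod n) :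
    (((2 * (v.1 : ℕ) + 6 * v.2.val) % 11 : ℕ) : ZMod 11) = F m n v := by
  rw [ZMod.natCast_mod]
  unfold F
  push_cast
  ring

lemma label_lt (v : Fin m × ZMod n) : (2 * (v.1 : ℕ) + 6 * v.2.val) % 11 < 11 :=
  Nat.mod_lt _ (by norm_num)

lemma Fbridge {u v : Fin m × ZMod n} {K : ZMod 11}
    (k : F m n v = F m n u + K) (h0 : K ≠ 0) (h1 : K ≠ 1) (h10 : K ≠ 10) :
    2 ≤ |(((2 * (u.1 : ℕ) + 6 * u.2.val) % 11 : ℕ) : ℤ) -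
          (((2 * (v.1 : ℕ) + 6 * v.2.val) % 11 : ℕ) : ℤ)| :=
  natBridge (label_lt u) (label_lt v)
    (by rw [cast_label, cast_label]; exact k) h0 h1 h10

lemma adj_iff {u v : Fin m × ZMod n} :
    (strongBundle m n ℓ).Adj u v ↔
      u ≠ v ∧ (bundleStep m n ℓ u v ∨ bundleStep m n ℓ v u) := Iff.rfl

end F2Aux

theorem f2_isL21Labeling (m n ℓ : ℕ) (hm : 3 ≤ m) (hn : 11 ∣ n) (hn0 : 0 < n) (hℓ : ℓ < n)
    (h : ∃ k : ℤ, (ℓ : ℤ) = (11 * k + 4 * m) % n) :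
    IsL21Labeling (strongBundle m n ℓ)
      (fun v => (2 * (v.1 : ℕ) + 6 * v.2.val) % 11) ∧
    ∀ v : Fin m × ZMod n, (2 * (v.1 : ℕ) + 6 * v.2.val) % 11 ≤ 10 := by
  have h11 : (11 : ZMod 11) = 0 := by decide
  have hl : (ℓ : ZMod 11) = 4 * m := by
    obtain ⟨k, hk⟩ := h
    have h1 : ((ℓ : ℤ) : ZMod 11) = ((11 * k + 4 * (m:ℤ) : ℤ) : ZMod 11) := by
      rw [hk, ZMod.intCast_eq_intCast_iff]
      exact (Int.mod_modEq _ _).of_dvd (by exact_mod_cast hn)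
    push_cast at h1
    rw [h1]
    linear_combination ((k : ZMod 11)) * h11
  refine ⟨⟨?_, ?_⟩, ?_⟩
  · intro u v hadj
    obtain ⟨hne, hst⟩ := F2Aux.adj_iff.mp hadj
    dsimp only
    rcases F2Aux.step_cases hst with c|c|c|c|c|c|c|c
    · exact F2Aux.Fbridge (F2Aux.d6 hn0 hn c) (by decide) (by decide) (by decide)
    · exact F2Aux.Fbridge (F2Aux.d5 hn0 hn c) (by decide) (by decide) (by decide)
    · exact F2Aux.Fbridge (F2Aux.e2 hm hn0 hn hl c) (by decide) (by decide) (by decide)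
    · exact F2Aux.Fbridge (F2Aux.e8 hm hn0 hn hl c) (by decide) (by decide) (by decide)
    · exact F2Aux.Fbridge (F2Aux.e7 hm hn0 hn hl c) (by decide) (by decide) (by decide)
    · rw [abs_sub_comm]
      exact F2Aux.Fbridge (F2Aux.e2 hm hn0 hn hl c) (by decide) (by decide) (by decide)
    · rw [abs_sub_comm]
      exact F2Aux.Fbridge (F2Aux.e8 hm hn0 hn hl c) (by decide) (by decide) (by decide)
    · rw [abs_sub_comm]
      exact F2Aux.Fbridge (F2Aux.e7 hm hn0 hn hl c) (by decide) (by decide) (by decide)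
  · intro u v hd
    dsimp only
    have hne0 : (strongBundle m n ℓ).dist u v ≠ 0 := by omega
    obtain ⟨p, hp⟩ := SimpleGraph.exists_walk_of_dist_ne_zero hne0
    rw [hd] at hp
    cases p with
    | nil => simp at hp
    | cons hadj q =>
      cases q with
      | nil => simp at hp
      | cons hadj' q' =>
        cases q' with
        | cons hadj'' q'' => simp at hp
        | nil =>
          have huv : u ≠ v := by
            intro e
            rw [e, SimpleGraph.dist_self] at hd
            omega
          have hFne : F2Aux.F m n u ≠ F2Aux.F m n v := fun hF =>
            huv (F2Aux.two_step hm hn0 hn hl (F2Aux.adj_iff.mp hadj).2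
              (F2Aux.adj_iff.mp hadj').2 hF)
          exact F2Aux.natBridge1 (F2Aux.label_lt u) (F2Aux.label_lt v)
            (by rw [F2Aux.cast_label, F2Aux.cast_label]; exact hFne)
  · intro v
    have := F2Aux.label_lt (m := m) (n := n) v
    omega
end

section
/- Let m ≥ 3 and let n be a positive multiple of 11, and let 0 ≤ ℓ < n. Suppose there exists an integer k such that ℓ = (11k + 3m) mod n. Then the map g₂ defined on the vertices of the strong graph bundle C_m ⊠^{σ_ℓ} C_n by g₂(i,j) = (6i + 2j) mod 11 is an L(2,1)-labeling whose labels all lie in {0,1,…,10}. -/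
section Aux

variable {m n : ℕ}

private def LL (u : Fin m × ZMod n) : ZMod 11 :=
  ((6 * (u.1 : ℕ) + 2 * u.2.val : ℕ) : ZMod 11)

private lemma LL_eq [NeZero n] (hn : 11 ∣ n) (u : Fin m × ZMod n) :
    LL u = 6 * ((u.1 : ℕ) : ZMod 11) + 2 * (ZMod.castHom hn (ZMod 11)) u.2 := by
  have hb : ((u.2.val : ℕ) : ZMod 11) = (ZMod.castHom hn (ZMod 11)) u.2 := by
    rw [ZMod.castHom_apply, ZMod.natCast_val]
  simp only [LL]
  push_cast
  rw [hb]

private def ClassA (u v : Fin m × ZMod n) : Prop :=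
  u.1 = v.1 ∧ ((v.2 = u.2 + 1 ∧ LL v = LL u + 2) ∨ (v.2 = u.2 - 1 ∧ LL v = LL u - 2))

private def ClassB (ℓ : ℕ) (u v : Fin m × ZMod n) : Prop :=
  ∃ (δ : ZMod n) (e : ZMod 11),
    ((δ = -1 ∧ e = -1) ∨ (δ = 0 ∧ e = 0) ∨ (δ = 1 ∧ e = 1)) ∧
    LL v = LL u + 6 + 2 * e ∧
    (((u.1 : ℕ) + 1 = (v.1 : ℕ) ∧ v.2 = u.2 + δ) ∨
     ((u.1 : ℕ) = m - 1 ∧ (v.1 : ℕ) = 0 ∧ v.2 = u.2 + (ℓ : ZMod n) + δ))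

private lemma classA_symm {u v : Fin m × ZMod n} (h : ClassA u v) : ClassA v u := by
  obtain ⟨h1, ⟨h2, h3⟩ | ⟨h2, h3⟩⟩ := h
  · exact ⟨h1.symm, Or.inr ⟨by rw [h2]; ring, by rw [h3]; ring⟩⟩
  · exact ⟨h1.symm, Or.inl ⟨by rw [h2]; ring, by rw [h3]; ring⟩⟩

private lemma step_class_s6 (hm : 3 ≤ m) [NeZero n] (hn : 11 ∣ n) {ℓ : ℕ}
    (hl : (ℓ : ZMod 11) = 3 * (m : ZMod 11)) {u v : Fin m × ZMod n}
    (h : bundleStep m n ℓ u v) : ClassA u v ∨ ClassB ℓ u v := by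
  have hm1 : (1 : ℕ) ≤ m := by omega
  rcases h with ⟨h1, h2 | h2⟩ | ⟨h1, h2 | h2 | h2⟩ | ⟨h1, h1', h2 | h2 | h2⟩
  · exact Or.inl ⟨h1, Or.inl ⟨h2, by
      rw [LL_eq hn, LL_eq hn, h2, ← h1, map_add, map_one]; ring⟩⟩
  · exact Or.inl ⟨h1, Or.inr ⟨h2, by
      rw [LL_eq hn, LL_eq hn, h2, ← h1, map_sub, map_one]; ring⟩⟩
  · refine Or.inr ⟨-1, -1, Or.inl ⟨rfl, rfl⟩, ?_, Or.inl ⟨h1, by rw [h2]; try ring⟩⟩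
    rw [LL_eq hn, LL_eq hn, h2, ← h1, map_sub, map_one]; push_cast; ring
  · refine Or.inr ⟨0, 0, Or.inr (Or.inl ⟨rfl, rfl⟩), ?_, Or.inl ⟨h1, by rw [h2]; try ring⟩⟩
    rw [LL_eq hn, LL_eq hn, h2, ← h1]; push_cast; ring
  · refine Or.inr ⟨1, 1, Or.inr (Or.inr ⟨rfl, rfl⟩), ?_, Or.inl ⟨h1, by rw [h2]; try ring⟩⟩
    rw [LL_eq hn, LL_eq hn, h2, ← h1, map_add, map_one]; push_cast; ring
  · refine Or.inr ⟨-1, -1, Or.inl ⟨rfl, rfl⟩, ?_, Or.inr ⟨h1, h1', by rw [h2]; try ring⟩⟩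
    rw [LL_eq hn, LL_eq hn, h2, h1, h1', map_sub, map_add, map_one, map_natCast,
      Nat.cast_sub hm1, hl]
    push_cast; ring
  · refine Or.inr ⟨0, 0, Or.inr (Or.inl ⟨rfl, rfl⟩), ?_, Or.inr ⟨h1, h1', by rw [h2]; try ring⟩⟩
    rw [LL_eq hn, LL_eq hn, h2, h1, h1', map_add, map_natCast, Nat.cast_sub hm1, hl]
    push_cast; ring
  · refine Or.inr ⟨1, 1, Or.inr (Or.inr ⟨rfl, rfl⟩), ?_, Or.inr ⟨h1, h1', by rw [h2]; try ring⟩⟩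
    rw [LL_eq hn, LL_eq hn, h2, h1, h1', map_add, map_add, map_one, map_natCast,
      Nat.cast_sub hm1, hl]
    push_cast; ring

private lemma prod_eq {u v : Fin m × ZMod n} (h1 : (u.1 : ℕ) = (v.1 : ℕ))
    (h2 : u.2 = v.2) : u = v :=
  Prod.ext_iff.mpr ⟨Fin.ext h1, h2⟩

private lemma ne_shift' {x y c : ZMod 11} (h : y = x + c) (hc : c ≠ 0) : x ≠ y :=
  fun e => hc (left_eq_add.mp (e ▸ h))

private lemma two_step_s6 {ℓ : ℕ} {u w v : Fin m × ZMod n}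
    (h1 : ClassA u w ∨ ClassB ℓ u w ∨ ClassB ℓ w u)
    (h2 : ClassA w v ∨ ClassB ℓ w v ∨ ClassB ℓ v w)
    (hne : u ≠ v) : LL u ≠ LL v := by
  rcases h1 with ⟨a1, hc1⟩ | ⟨δ1, e1, t1, q1, s1⟩ | ⟨δ1, e1, t1, q1, s1⟩
  · -- ClassA u w
    rcases h2 with ⟨a2, hc2⟩ | ⟨δ2, e2, t2, q2, s2⟩ | ⟨δ2, e2, t2, q2, s2⟩
    · -- A / A
      rcases hc1 with ⟨p1, q1⟩ | ⟨p1, q1⟩ <;> rcases hc2 with ⟨p2, q2⟩ | ⟨p2, q2⟩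
      · exact ne_shift' (c := 2 + 2) (by linear_combination q1 + q2) (by decide)
      · exact absurd (prod_eq (by rw [a1, a2]) (by rw [p2, p1]; ring)) hne
      · exact absurd (prod_eq (by rw [a1, a2]) (by rw [p2, p1]; ring)) hne
      · exact ne_shift' (c := -2 + -2) (by linear_combination q1 + q2) (by decide)
    · -- A / B(w,v)
      rcases hc1 with ⟨p1, r1⟩ | ⟨p1, r1⟩
      · exact ne_shift' (c := 2 + (6 + 2 * e2)) (by linear_combination r1 + q2)
          (by rcases t2 with ⟨_, he⟩ | ⟨_, he⟩ | ⟨_, he⟩ <;> subst he <;> decide)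
      · exact ne_shift' (c := -2 + (6 + 2 * e2)) (by linear_combination r1 + q2)
          (by rcases t2 with ⟨_, he⟩ | ⟨_, he⟩ | ⟨_, he⟩ <;> subst he <;> decide)
    · -- A / B(v,w)
      rcases hc1 with ⟨p1, r1⟩ | ⟨p1, r1⟩
      · exact ne_shift' (c := 2 - (6 + 2 * e2)) (by linear_combination r1 - q2)
          (by rcases t2 with ⟨_, he⟩ | ⟨_, he⟩ | ⟨_, he⟩ <;> subst he <;> decide)
      · exact ne_shift' (c := -2 - (6 + 2 * e2)) (by linear_combination r1 - q2)
          (by rcases t2 with ⟨_, he⟩ | ⟨_, he⟩ | ⟨_, he⟩ <;> subst he <;> decide)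
  · -- ClassB u w  (forward u → w)
    rcases h2 with ⟨a2, hc2⟩ | ⟨δ2, e2, t2, q2, s2⟩ | ⟨δ2, e2, t2, q2, s2⟩
    · -- B(u,w) / A
      rcases hc2 with ⟨p2, r2⟩ | ⟨p2, r2⟩
      · exact ne_shift' (c := (6 + 2 * e1) + 2) (by linear_combination q1 + r2)
          (by rcases t1 with ⟨_, he⟩ | ⟨_, he⟩ | ⟨_, he⟩ <;> subst he <;> decide)
      · exact ne_shift' (c := (6 + 2 * e1) + -2) (by linear_combination q1 + r2)
          (by rcases t1 with ⟨_, he⟩ | ⟨_, he⟩ | ⟨_, he⟩ <;> subst he <;> decide)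
    · -- B(u,w) / B(w,v) : both forward
      exact ne_shift' (c := (6 + 2 * e1) + (6 + 2 * e2)) (by linear_combination q1 + q2)
        (by rcases t1 with ⟨_, he⟩ | ⟨_, he⟩ | ⟨_, he⟩ <;>
            rcases t2 with ⟨_, he2⟩ | ⟨_, he2⟩ | ⟨_, he2⟩ <;> subst he he2 <;> decide)
    · -- B(u,w) / B(v,w) : forward then backward, structural on diagonal
      rcases t1 with ⟨hd1, he1⟩ | ⟨hd1, he1⟩ | ⟨hd1, he1⟩ <;>
        rcases t2 with ⟨hd2, he2⟩ | ⟨hd2, he2⟩ | ⟨hd2, he2⟩ <;>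
        first
        | exact ne_shift' (c := 2 * e1 - 2 * e2) (by linear_combination q1 - q2)
            (by rw [he1, he2]; decide)
        | · have hδ : δ1 = δ2 := by rw [hd1, hd2]
            rw [hδ] at s1
            rcases s1 with ⟨b1, f1⟩ | ⟨b1, b1', f1⟩ <;> rcases s2 with ⟨b2, f2⟩ | ⟨b2, b2', f2⟩
            · exact absurd (prod_eq (by omega) (add_right_cancel (f1.symm.trans f2))) hne
            · exact absurd (b1.trans b2') (Nat.succ_ne_zero _)
            · exact absurd (b2.trans b1') (Nat.succ_ne_zero _)
            · refine absurd (prod_eq (b1.trans b2.symm) ?_) hne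
              have := f1.symm.trans f2
              exact add_right_cancel (add_right_cancel this)
  · -- ClassB w u  (backward: forward w → u)
    rcases h2 with ⟨a2, hc2⟩ | ⟨δ2, e2, t2, q2, s2⟩ | ⟨δ2, e2, t2, q2, s2⟩
    · -- B(w,u) / A
      rcases hc2 with ⟨p2, r2⟩ | ⟨p2, r2⟩
      · exact ne_shift' (c := -(6 + 2 * e1) + 2) (by linear_combination -q1 + r2)
          (by rcases t1 with ⟨_, he⟩ | ⟨_, he⟩ | ⟨_, he⟩ <;> subst he <;> decide)
      · exact ne_shift' (c := -(6 + 2 * e1) + -2) (by linear_combination -q1 + r2)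
          (by rcases t1 with ⟨_, he⟩ | ⟨_, he⟩ | ⟨_, he⟩ <;> subst he <;> decide)
    · -- B(w,u) / B(w,v) : backward then forward, structural on diagonal
      rcases t1 with ⟨hd1, he1⟩ | ⟨hd1, he1⟩ | ⟨hd1, he1⟩ <;>
        rcases t2 with ⟨hd2, he2⟩ | ⟨hd2, he2⟩ | ⟨hd2, he2⟩ <;>
        first
        | exact ne_shift' (c := 2 * e2 - 2 * e1) (by linear_combination q2 - q1)
            (by rw [he1, he2]; decide)
        | · have hδ : δ1 = δ2 := by rw [hd1, hd2]
            rw [hδ] at s1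
            rcases s1 with ⟨b1, f1⟩ | ⟨b1, b1', f1⟩ <;> rcases s2 with ⟨b2, f2⟩ | ⟨b2, b2', f2⟩
            · exact absurd (prod_eq (by omega) (f1.trans f2.symm)) hne
            · exfalso; have := u.1.isLt; omega
            · exfalso; have := v.1.isLt; omega
            · exact absurd (prod_eq (b1'.trans b2'.symm) (f1.trans f2.symm)) hne
    · -- B(w,u) / B(v,w) : both backward
      exact ne_shift' (c := -(6 + 2 * e1) - (6 + 2 * e2)) (by linear_combination -q1 - q2)
        (by rcases t1 with ⟨_, he⟩ | ⟨_, he⟩ | ⟨_, he⟩ <;>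
            rcases t2 with ⟨_, he2⟩ | ⟨_, he2⟩ | ⟨_, he2⟩ <;> subst he he2 <;> decide)
private lemma shifts {x y c : ZMod 11} (h : y = x + c) (h0 : c ≠ 0) (h1 : c ≠ 1)
    (h2 : c ≠ -1) : x ≠ y ∧ x ≠ y + 1 ∧ y ≠ x + 1 := by
  subst h
  refine ⟨fun e => h0 (left_eq_add.mp e), fun e => ?_, fun e => h1 (add_left_cancel e)⟩
  rw [add_assoc] at e
  exact h2 (eq_neg_of_add_eq_zero_left (left_eq_add.mp e))

private lemma class_triple {ℓ : ℕ} {u v : Fin m × ZMod n}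
    (h : ClassA u v ∨ ClassB ℓ u v ∨ ClassB ℓ v u) :
    LL u ≠ LL v ∧ LL u ≠ LL v + 1 ∧ LL v ≠ LL u + 1 := by
  rcases h with ⟨_, ⟨_, q⟩ | ⟨_, q⟩⟩ | ⟨δ, e, t, q, _⟩ | ⟨δ, e, t, q, _⟩
  · exact shifts (c := 2) (by linear_combination q) (by decide) (by decide) (by decide)
  · exact shifts (c := -2) (by linear_combination q) (by decide) (by decide) (by decide)
  · refine shifts (c := 6 + 2 * e) (by linear_combination q) ?_ ?_ ?_ <;>
      rcases t with ⟨_, he⟩ | ⟨_, he⟩ | ⟨_, he⟩ <;> rw [he] <;> decide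
  · have t3 := shifts (x := LL v) (y := LL u) (c := 6 + 2 * e) (by linear_combination q)
      (by rcases t with ⟨_, he⟩ | ⟨_, he⟩ | ⟨_, he⟩ <;> rw [he] <;> decide)
      (by rcases t with ⟨_, he⟩ | ⟨_, he⟩ | ⟨_, he⟩ <;> rw [he] <;> decide)
      (by rcases t with ⟨_, he⟩ | ⟨_, he⟩ | ⟨_, he⟩ <;> rw [he] <;> decide)
    exact ⟨t3.1.symm, t3.2.2, t3.2.1⟩

private lemma abs_ge_two {a b : ℕ} (ha : a < 11) (hb : b < 11)
    (h0 : (a : ZMod 11) ≠ (b : ZMod 11)) (h1 : (a : ZMod 11) ≠ (b : ZMod 11) + 1)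
    (h2 : (b : ZMod 11) ≠ (a : ZMod 11) + 1) : 2 ≤ |(a : ℤ) - (b : ℤ)| := by
  by_contra hcon
  push_neg at hcon
  rw [abs_lt] at hcon
  obtain ⟨hc1, hc2⟩ := hcon
  have hcase : a = b ∨ a = b + 1 ∨ b = a + 1 := by omega
  rcases hcase with hc | hc | hc
  · exact h0 (by rw [hc])
  · exact h1 (by rw [hc]; push_cast; ring)
  · exact h2 (by rw [hc]; push_cast; ring)

private lemma abs_ge_one {a b : ℕ} (h0 : (a : ZMod 11) ≠ (b : ZMod 11)) :
    1 ≤ |(a : ℤ) - (b : ℤ)| := by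
  refine Int.one_le_abs (sub_ne_zero.mpr ?_)
  exact_mod_cast fun e : (a : ℤ) = b => h0 (by exact_mod_cast congrArg (Int.cast : ℤ → ZMod 11) e)

private lemma cast_label (u : Fin m × ZMod n) :
    (((6 * (u.1 : ℕ) + 2 * u.2.val) % 11 : ℕ) : ZMod 11) = LL u := by
  rw [ZMod.natCast_mod]; rfl

private lemma adj_class_s6 (hm : 3 ≤ m) [NeZero n] (hn : 11 ∣ n) {ℓ : ℕ}
    (hl : (ℓ : ZMod 11) = 3 * (m : ZMod 11)) {u v : Fin m × ZMod n}
    (hadj : (strongBundle m n ℓ).Adj u v) :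
    ClassA u v ∨ ClassB ℓ u v ∨ ClassB ℓ v u := by
  rcases hadj.2 with hs | hs
  · rcases step_class_s6 hm hn hl hs with hA | hB
    exacts [Or.inl hA, Or.inr (Or.inl hB)]
  · rcases step_class_s6 hm hn hl hs with hA | hB
    exacts [Or.inl (classA_symm hA), Or.inr (Or.inr hB)]

end Aux

theorem g2_isL21Labeling (m n ℓ : ℕ) (hm : 3 ≤ m) (hn : 11 ∣ n) (hn0 : 0 < n) (hℓ : ℓ < n)
    (h : ∃ k : ℤ, (ℓ : ℤ) = (11 * k + 3 * m) % n) :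
    IsL21Labeling (strongBundle m n ℓ)
      (fun v => (6 * (v.1 : ℕ) + 2 * v.2.val) % 11) ∧
    ∀ v : Fin m × ZMod n, (6 * (v.1 : ℕ) + 2 * v.2.val) % 11 ≤ 10 := by
  haveI : NeZero n := ⟨hn0.ne'⟩
  obtain ⟨k, hk⟩ := h
  have hn0' : ((n : ℕ) : ZMod 11) = 0 := (ZMod.natCast_eq_zero_iff n 11).mpr hn
  have h11 : (11 : ZMod 11) = 0 := by decide
  have hl : (ℓ : ZMod 11) = 3 * (m : ZMod 11) := by
    have hc : ((ℓ : ℤ) : ZMod 11) = (((11 * k + 3 * m) % n : ℤ) : ZMod 11) := by rw [hk]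
    rw [Int.emod_def] at hc
    push_cast at hc ⊢
    rw [hc, hn0', h11]
    ring
  have hlt : ∀ u : Fin m × ZMod n, (6 * (u.1 : ℕ) + 2 * u.2.val) % 11 < 11 :=
    fun u => Nat.mod_lt _ (by norm_num)
  refine ⟨⟨fun u v hadj => ?_, fun u v hdist => ?_⟩, fun v => Nat.lt_succ_iff.mp (hlt v)⟩
  · have ht := class_triple (adj_class_s6 hm hn hl hadj)
    exact abs_ge_two (hlt u) (hlt v)
      (by rw [cast_label, cast_label]; exact ht.1)
      (by rw [cast_label, cast_label]; exact ht.2.1)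
      (by rw [cast_label, cast_label]; exact ht.2.2)
  · have hne : u ≠ v := by
      intro e; subst e; rw [SimpleGraph.dist_self] at hdist; omega
    obtain ⟨p, hp⟩ := SimpleGraph.exists_walk_of_dist_ne_zero
      (G := strongBundle m n ℓ) (u := u) (v := v) (by omega)
    rw [hdist] at hp
    cases p with
    | nil => simp at hp
    | cons h1 q =>
      cases q with
      | nil => simp at hp
      | cons h2 r =>
        cases r with
        | cons h3 s => simp [SimpleGraph.Walk.length_cons] at hp
        | nil =>
          have hLne := two_step_s6 (adj_class_s6 hm hn hl h1) (adj_class_s6 hm hn hl h2) hne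
          exact abs_ge_one (by rw [cast_label, cast_label]; exact hLne)
end

section
/- Let G be a finite simple graph with maximum degree Δ ≥ 2. If G contains three distinct vertices u, v, w each of degree Δ such that u is adjacent to both v and w, then λ(G) ≥ Δ + 2. -/
open SimpleGraph in
lemma my_dist_two {V : Type*} (G : SimpleGraph V) {x y z : V}
    (hxy : G.Adj x y) (hxz : G.Adj x z) (hne : y ≠ z) (hnadj : ¬ G.Adj y z) :
    G.dist y z = 2 := by
  have hle : G.dist y z ≤ 2 := by
    have := SimpleGraph.dist_le (Walk.cons hxy.symm (Walk.cons hxz Walk.nil))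
    simpa using this
  have h0 : G.dist y z ≠ 0 := by
    exact fun h => hne ((SimpleGraph.Reachable.dist_eq_zero_iff
      ⟨Walk.cons hxy.symm (Walk.cons hxz Walk.nil)⟩).mp h)
  have h1 : G.dist y z ≠ 1 := fun h => hnadj (SimpleGraph.dist_eq_one_iff_adj.mp h)
  omega

lemma my_key {V : Type*} [Fintype V] (G : SimpleGraph V) [DecidableRel G.Adj]
    (f : V → ℕ) (hf : IsL21Labeling G f) (m M : ℕ)
    (hm : ∀ x, m ≤ f x) (hM : ∀ x, f x ≤ M)
    (hspan : M ≤ m + G.maxDegree + 1)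
    (x : V) (hx : G.degree x = G.maxDegree) : f x = m ∨ f x = M := by
  by_contra hcon
  push_neg at hcon
  have hmx : m < f x := lt_of_le_of_ne (hm x) (Ne.symm hcon.1)
  have hxM : f x < M := lt_of_le_of_ne (hM x) hcon.2
  have hninj : ∀ y ∈ G.neighborFinset x, ∀ z ∈ G.neighborFinset x, f y = f z → y = z := by
    intro y hy z hz hfyz
    by_contra hne
    rw [SimpleGraph.mem_neighborFinset] at hy hz
    by_cases hadj : G.Adj y z
    · have := hf.1 y z hadj
      rw [hfyz] at this
      simp at this
    · have := hf.2 y z (my_dist_two G hy hz hne hadj)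
      rw [hfyz] at this
      simp at this
  have hsub : (G.neighborFinset x).image f ⊆
      (Finset.Icc m M) \ {f x - 1, f x, f x + 1} := by
    intro a ha
    rw [Finset.mem_image] at ha
    obtain ⟨y, hy, rfl⟩ := ha
    rw [SimpleGraph.mem_neighborFinset] at hy
    have h2 := le_abs.mp (hf.1 x y hy)
    rw [Finset.mem_sdiff, Finset.mem_Icc]
    refine ⟨⟨hm y, hM y⟩, ?_⟩
    simp only [Finset.mem_insert, Finset.mem_singleton]
    push_neg
    push_cast at h2
    omega
  have hcard1 : ((G.neighborFinset x).image f).card = G.maxDegree := by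
    rw [Finset.card_image_of_injOn hninj, SimpleGraph.card_neighborFinset_eq_degree, hx]
  have hcard2 : (((Finset.Icc m M)) \ ({f x - 1, f x, f x + 1} : Finset ℕ)).card
      ≤ G.maxDegree - 1 := by
    have hsub2 : ({f x - 1, f x, f x + 1} : Finset ℕ) ⊆ Finset.Icc m M := by
      intro a ha
      simp only [Finset.mem_insert, Finset.mem_singleton] at ha
      rw [Finset.mem_Icc]
      omega
    rw [Finset.card_sdiff_of_subset hsub2]
    have h3 : ({f x - 1, f x, f x + 1} : Finset ℕ).card = 3 := by
      rw [Finset.card_insert_of_notMem, Finset.card_insert_of_notMem] <;>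
        simp <;> omega
    rw [h3, Nat.card_Icc]
    omega
  have := Finset.card_le_card hsub
  omega
theorem lambda_ge_maxDegree_add_two {V : Type*} [Fintype V] (G : SimpleGraph V)
    [DecidableRel G.Adj] (hΔ : 2 ≤ G.maxDegree)
    (u v w : V) (huv : u ≠ v) (huw : u ≠ w) (hvw : v ≠ w)
    (hdu : G.degree u = G.maxDegree) (hdv : G.degree v = G.maxDegree)
    (hdw : G.degree w = G.maxDegree)
    (hadj1 : G.Adj u v) (hadj2 : G.Adj u w) :
    G.maxDegree + 2 ≤ lambdaNumber G := by
  have hne : { s : ℕ | ∃ f : V → ℕ, IsL21Labeling G f ∧ spanOf f = s }.Nonempty := by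
    refine ⟨spanOf (fun x => 2 * ((Fintype.equivFin V) x : ℕ)),
      (fun x => 2 * ((Fintype.equivFin V) x : ℕ)), ⟨?_, ?_⟩, rfl⟩
    · intro a b hab
      have hne' : ((Fintype.equivFin V) a : ℕ) ≠ ((Fintype.equivFin V) b : ℕ) :=
        fun h => hab.ne (by simpa using (Fintype.equivFin V).injective (Fin.ext h))
      rw [le_abs]
      push_cast
      omega
    · intro a b hab
      have hab' : a ≠ b := by
        intro h; subst h; simp [SimpleGraph.dist_self] at hab
      have hne' : ((Fintype.equivFin V) a : ℕ) ≠ ((Fintype.equivFin V) b : ℕ) :=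
        fun h => hab' ((Fintype.equivFin V).injective (Fin.ext h))
      rw [le_abs]
      push_cast
      omega
  rw [lambdaNumber]
  refine le_csInf hne ?_
  rintro s ⟨f, hf, rfl⟩
  by_contra hcon
  push_neg at hcon
  set M := sSup (Set.range f) with hMdef
  set m := sInf (Set.range f) with hmdef
  have hbdd : BddAbove (Set.range f) := (Set.finite_range f).bddAbove
  have hM : ∀ x, f x ≤ M := fun x => le_csSup hbdd ⟨x, rfl⟩
  have hm : ∀ x, m ≤ f x := fun x => Nat.sInf_le ⟨x, rfl⟩
  have hspan : M ≤ m + G.maxDegree + 1 := by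
    have h1 : spanOf f = M - m := rfl
    have h2 : m ≤ M := le_trans (hm u) (hM u)
    omega
  have hu := my_key G f hf m M hm hM hspan u hdu
  have hv := my_key G f hf m M hm hM hspan v hdv
  have hw := my_key G f hf m M hm hM hspan w hdw
  have h1 := le_abs.mp (hf.1 u v hadj1)
  have h2 := le_abs.mp (hf.1 u w hadj2)
  push_cast at h1 h2
  have hfvw : f v = f w := by omega
  by_cases hadj : G.Adj v w
  · have := hf.1 v w hadj
    rw [hfvw] at this
    simp at this
  · have := hf.2 v w (my_dist_two G hadj1 hadj2 hvw hadj)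
    rw [hfvw] at this
    simp at this
end

section
/- Let m ≥ 2 and let n be a positive multiple of 11. Then the map f defined on the vertices of the strong product P_m ⊠ C_n by f(i,j) = (2i + 5j) mod 11 is an L(2,1)-labeling of P_m ⊠ C_n whose labels all lie in {0,1,…,10}; consequently λ(P_m ⊠ C_n) ≤ 10. -/
/-- The path graph `P_m` on vertices `0, …, m-1`. -/
def pathG (m : ℕ) : SimpleGraph (Fin m) where
  Adj i j := (i : ℕ) + 1 = (j : ℕ) ∨ (j : ℕ) + 1 = (i : ℕ)
  symm := ⟨fun i j h => h.symm⟩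
  loopless := ⟨by intro i h; rcases h with h | h <;> omega⟩

/-- The cycle graph `C_n` on vertices `0, …, n-1` (as `ZMod n`). -/
def cycleG (n : ℕ) : SimpleGraph (ZMod n) where
  Adj u v := u ≠ v ∧ (v = u + 1 ∨ u = v + 1)
  symm := ⟨fun u v ⟨h1, h2⟩ => ⟨h1.symm, h2.symm⟩⟩
  loopless := ⟨fun u h => h.1 rfl⟩

/-- The strong product `G ⊠ H`. -/
def strongProd {α β : Type*} (G : SimpleGraph α) (H : SimpleGraph β) :
    SimpleGraph (α × β) where
  Adj u v :=
    (u.1 = v.1 ∧ H.Adj u.2 v.2) ∨ (u.2 = v.2 ∧ G.Adj u.1 v.1) ∨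
    (G.Adj u.1 v.1 ∧ H.Adj u.2 v.2)
  symm := ⟨by
    rintro u v (⟨h1, h2⟩ | ⟨h1, h2⟩ | ⟨h1, h2⟩)
    · exact Or.inl ⟨h1.symm, h2.symm⟩
    · exact Or.inr (Or.inl ⟨h1.symm, h2.symm⟩)
    · exact Or.inr (Or.inr ⟨h1.symm, h2.symm⟩)⟩
  loopless := ⟨by
    rintro u (⟨-, h⟩ | ⟨-, h⟩ | ⟨h, -⟩)
    · exact H.irrefl h
    · exact G.irrefl h
    · exact G.irrefl h⟩

lemma cyc_val {n : ℕ} (hn : 11 ∣ n) (hn0 : 0 < n) {u v : ZMod n} (h : v = u + 1) :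
    v.val % 11 = (u.val + 1) % 11 := by
  haveI : NeZero n := ⟨hn0.ne'⟩
  have h11 : 11 ≤ n := Nat.le_of_dvd hn0 hn
  haveI : Fact (1 < n) := ⟨by omega⟩
  subst h
  rw [ZMod.val_add, ZMod.val_one]
  exact Nat.mod_mod_of_dvd _ hn

lemma adj_facts {m n : ℕ} (hn : 11 ∣ n) (hn0 : 0 < n) {u v : Fin m × ZMod n}
    (h : (strongProd (pathG m) (cycleG n)).Adj u v) :
    ∃ d e : ℤ, -1 ≤ d ∧ d ≤ 1 ∧ -1 ≤ e ∧ e ≤ 1 ∧ ¬(d = 0 ∧ e = 0) ∧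
      (v.1 : ℤ) = (u.1 : ℤ) + d ∧ v.2 = u.2 + (e : ZMod n) ∧
      (v.2.val : ℤ) % 11 = ((u.2.val : ℤ) + e) % 11 := by
  rcases h with ⟨h1, h2⟩ | ⟨h1, h2⟩ | ⟨h1, h2⟩
  · rcases h2.2 with hc | hc
    · refine ⟨0, 1, by norm_num, by norm_num, by norm_num, by norm_num, by simp,
        by simp [h1], by push_cast; rw [hc], ?_⟩
      have := cyc_val hn hn0 hc; omega
    · refine ⟨0, -1, by norm_num, by norm_num, by norm_num, by norm_num, by simp,
        by simp [h1], ?_, ?_⟩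
      · push_cast; rw [hc]; ring
      · have := cyc_val hn hn0 hc; omega
  · rcases h2 with hp | hp
    · exact ⟨1, 0, by norm_num, by norm_num, by norm_num, by norm_num, by simp,
        by push_cast; omega, by rw [h1]; push_cast; ring, by rw [h1]; ring_nf⟩
    · exact ⟨-1, 0, by norm_num, by norm_num, by norm_num, by norm_num, by simp,
        by push_cast; omega, by rw [h1]; push_cast; ring, by rw [h1]; ring_nf⟩
  · rcases h1 with hp | hp <;> rcases h2.2 with hc | hc
    · refine ⟨1, 1, by norm_num, by norm_num, by norm_num, by norm_num, by simp,
        by push_cast; omega, by push_cast; rw [hc], ?_⟩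
      have := cyc_val hn hn0 hc; omega
    · refine ⟨1, -1, by norm_num, by norm_num, by norm_num, by norm_num, by simp,
        by push_cast; omega, by push_cast; rw [hc]; ring, ?_⟩
      have := cyc_val hn hn0 hc; omega
    · refine ⟨-1, 1, by norm_num, by norm_num, by norm_num, by norm_num, by simp,
        by push_cast; omega, by push_cast; rw [hc], ?_⟩
      have := cyc_val hn hn0 hc; omega
    · refine ⟨-1, -1, by norm_num, by norm_num, by norm_num, by norm_num, by simp,
        by push_cast; omega, by push_cast; rw [hc]; ring, ?_⟩
      have := cyc_val hn hn0 hc; omega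



lemma two_step_aux (a b p q x y : ℤ) (hx1 : -2 ≤ x) (hx2 : x ≤ 2) (hy1 : -2 ≤ y)
    (hy2 : y ≤ 2) (hb : b = a + x) (hq : q % 11 = (p + y) % 11)
    (heq : (2 * a + 5 * p) % 11 = (2 * b + 5 * q) % 11) : x = 0 ∧ y = 0 := by
  interval_cases x <;> interval_cases y <;> omega

theorem f_isL21Labeling_pathProdCycle (m n : ℕ) (hm : 2 ≤ m) (hn : 11 ∣ n) (hn0 : 0 < n) :
    IsL21Labeling (strongProd (pathG m) (cycleG n))
      (fun v => (2 * (v.1 : ℕ) + 5 * v.2.val) % 11) ∧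
    (∀ v : Fin m × ZMod n, (2 * (v.1 : ℕ) + 5 * v.2.val) % 11 ≤ 10) ∧
    lambdaNumber (strongProd (pathG m) (cycleG n)) ≤ 10 := by
  have hlabel : IsL21Labeling (strongProd (pathG m) (cycleG n))
      (fun v => (2 * (v.1 : ℕ) + 5 * v.2.val) % 11) := by
    constructor
    · intro u v h
      obtain ⟨d, e, hd1, hd2, he1, he2, hne, hiv, _, hjv⟩ := adj_facts hn hn0 h
      rw [le_abs]
      interval_cases d <;> interval_cases e <;> simp at hne ⊢ <;> omega
    · intro u v hdist
      have huv : u ≠ v := by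
        intro h; subst h; rw [SimpleGraph.dist_self] at hdist; omega
      have hr : (strongProd (pathG m) (cycleG n)).Reachable u v := by
        by_contra hnr
        rw [SimpleGraph.dist_eq_zero_of_not_reachable hnr] at hdist; omega
      obtain ⟨p, hp⟩ := hr.exists_walk_length_eq_dist
      rw [hdist] at hp
      match p, hp with
      | SimpleGraph.Walk.cons h1 (SimpleGraph.Walk.cons h2 SimpleGraph.Walk.nil), _ =>
        rename_i w _
        obtain ⟨d1, e1, hd11, hd12, he11, he12, _, hiv1, hz1, hjv1⟩ := adj_facts hn hn0 h1
        obtain ⟨d2, e2, hd21, hd22, he21, he22, _, hiv2, hz2, hjv2⟩ := adj_facts hn hn0 h2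
        rw [le_abs]
        by_contra hcon
        push_neg at hcon
        have heq : (2 * (u.1 : ℕ) + 5 * u.2.val) % 11 = (2 * (v.1 : ℕ) + 5 * v.2.val) % 11 := by
          omega
        have hsum : d1 + d2 = 0 ∧ e1 + e2 = 0 := by
          apply two_step_aux (u.1 : ℤ) (v.1 : ℤ) (u.2.val : ℤ) (v.2.val : ℤ)
            (d1 + d2) (e1 + e2) (by omega) (by omega) (by omega) (by omega)
            (by omega) (by omega) (by omega)
        apply huv
        have h1eq : u.1 = v.1 := by
          have : (v.1 : ℤ) = (u.1 : ℤ) := by omega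
          exact Fin.ext (by exact_mod_cast this.symm)
        have h2eq : u.2 = v.2 := by
          rw [hz2, hz1]
          have : ((e1 : ZMod n) + (e2 : ZMod n)) = 0 := by
            have := hsum.2
            push_cast [← Int.cast_add, this]
            simp
          rw [add_assoc, this, add_zero]
        exact Prod.ext h1eq h2eq
  refine ⟨hlabel, fun v => Nat.le_of_lt_succ (Nat.mod_lt _ (by norm_num)), ?_⟩
  have hv : Nonempty (Fin m × ZMod n) := by
    haveI : NeZero n := ⟨hn0.ne'⟩
    exact ⟨⟨0, by omega⟩, 0⟩
  have hmem : spanOf (fun v : Fin m × ZMod n => (2 * (v.1 : ℕ) + 5 * v.2.val) % 11) ∈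
      { s : ℕ | ∃ f : Fin m × ZMod n → ℕ,
        IsL21Labeling (strongProd (pathG m) (cycleG n)) f ∧ spanOf f = s } :=
    ⟨_, hlabel, rfl⟩
  have hle := Nat.sInf_le hmem
  refine le_trans hle ?_
  have hsup : sSup (Set.range fun v : Fin m × ZMod n => (2 * (v.1 : ℕ) + 5 * v.2.val) % 11) ≤ 10 := by
    apply csSup_le (Set.range_nonempty _)
    rintro b ⟨v, rfl⟩
    exact Nat.le_of_lt_succ (Nat.mod_lt _ (by norm_num))
  calc spanOf _ ≤ sSup (Set.range fun v : Fin m × ZMod n => (2 * (v.1 : ℕ) + 5 * v.2.val) % 11) :=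
        Nat.sub_le _ _
    _ ≤ 10 := hsup
end

section
/- For every ℓ ∈ {3, 5, 6, 8}, the λ-number of the strong graph bundle C₁₃ ⊠^{σ_ℓ} C₁₁ (base cycle of length 13, fiber cycle of length 11, cyclic ℓ-shift) equals 10. -/
/-! ### Auxiliary material -/

/-- The linear labeling `(i, j) ↦ (α i + β j) mod 11`. -/
def labf (α β : ℕ) (p : Fin 13 × ZMod 11) : ℕ := (α * (p.1 : ℕ) + β * p.2.val) % 11

/-- The same labeling viewed inside `ZMod 11`. -/
def gl (α β : ℕ) (p : Fin 13 × ZMod 11) : ZMod 11 :=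
  (α : ZMod 11) * ((p.1 : ℕ) : ZMod 11) + (β : ZMod 11) * p.2

lemma labf_lt (α β : ℕ) (p : Fin 13 × ZMod 11) : labf α β p < 11 :=
  Nat.mod_lt _ (by norm_num)

lemma cast_labf (α β : ℕ) (p : Fin 13 × ZMod 11) :
    ((labf α β p : ℕ) : ZMod 11) = gl α β p := by
  unfold labf gl
  rw [ZMod.natCast_mod]
  push_cast
  rw [ZMod.natCast_rightInverse p.2]

lemma bridge2 {a b : ℕ} (ha : a < 11) (hb : b < 11)
    (h0 : ((a : ℕ) : ZMod 11) ≠ ((b : ℕ) : ZMod 11))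
    (h1 : ((a : ℕ) : ZMod 11) ≠ ((b : ℕ) : ZMod 11) + 1)
    (h2 : ((b : ℕ) : ZMod 11) ≠ ((a : ℕ) : ZMod 11) + 1) :
    2 ≤ |(a : ℤ) - (b : ℤ)| := by
  have e0 : ¬ (a ≡ b [MOD 11]) := fun h => h0 ((ZMod.natCast_eq_natCast_iff _ _ _).mpr h)
  have e1 : ¬ (a ≡ b + 1 [MOD 11]) := by
    intro h
    have := (ZMod.natCast_eq_natCast_iff a (b+1) 11).mpr h
    push_cast at this
    exact h1 this
  have e2 : ¬ (b ≡ a + 1 [MOD 11]) := by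
    intro h
    have := (ZMod.natCast_eq_natCast_iff b (a+1) 11).mpr h
    push_cast at this
    exact h2 this
  unfold Nat.ModEq at e0 e1 e2
  rw [le_abs]
  omega

lemma g_comp (α β : ℕ) (u v : Fin 13 × ZMod 11) (a : ℤ) (t : ZMod 11)
    (hia : ((v.1 : ℕ) : ℤ) - ((u.1 : ℕ) : ℤ) = a) (ht : v.2 = u.2 + t) :
    gl α β v = gl α β u + (α : ZMod 11) * ((a : ℤ) : ZMod 11) + (β : ZMod 11) * t := by
  have h1 : ((v.1 : ℕ) : ℤ) = ((u.1 : ℕ) : ℤ) + a := by omega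
  have h2 : (((v.1 : ℕ) : ℕ) : ZMod 11) = (((u.1 : ℕ) : ℕ) : ZMod 11) + ((a : ℤ) : ZMod 11) := by
    have h3 := congrArg (Int.cast : ℤ → ZMod 11) h1
    push_cast at h3 ⊢
    exact h3
  unfold gl
  rw [h2, ht]
  ring

lemma adj_data (ℓ : ℕ) (u v : Fin 13 × ZMod 11)
    (h : (strongBundle 13 11 ℓ).Adj u v) :
    ∃ (a : ℤ) (t : ZMod 11),
      ((v.1 : ℕ) : ℤ) - ((u.1 : ℕ) : ℤ) = a ∧ v.2 = u.2 + t ∧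
      ( (a = 0 ∧ (t = 1 ∨ t = -1)) ∨
        (a = 1 ∧ (t = -1 ∨ t = 0 ∨ t = 1)) ∨
        (a = -1 ∧ (t = -1 ∨ t = 0 ∨ t = 1)) ∨
        (a = -12 ∧ (t = (ℓ : ZMod 11) - 1 ∨ t = (ℓ : ZMod 11) ∨ t = (ℓ : ZMod 11) + 1)) ∨
        (a = 12 ∧ (t = -(ℓ : ZMod 11) - 1 ∨ t = -(ℓ : ZMod 11) ∨ t = -(ℓ : ZMod 11) + 1)) ) := by
  obtain ⟨hne, hs | hs⟩ := h
  · rcases hs with ⟨h1, h2 | h2⟩ | ⟨h1, h2 | h2 | h2⟩ | ⟨h1, h1', h2 | h2 | h2⟩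
    · exact ⟨0, 1, by rw [h1]; exact sub_self _, h2, Or.inl ⟨rfl, Or.inl rfl⟩⟩
    · exact ⟨0, -1, by rw [h1]; exact sub_self _, by rw [h2]; ring,
        Or.inl ⟨rfl, Or.inr rfl⟩⟩
    · exact ⟨1, -1, by omega, by rw [h2]; ring, Or.inr (Or.inl ⟨rfl, Or.inl rfl⟩)⟩
    · exact ⟨1, 0, by omega, by rw [h2]; ring, Or.inr (Or.inl ⟨rfl, Or.inr (Or.inl rfl)⟩)⟩
    · exact ⟨1, 1, by omega, h2, Or.inr (Or.inl ⟨rfl, Or.inr (Or.inr rfl)⟩)⟩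
    · exact ⟨-12, (ℓ : ZMod 11) - 1, by simp at h1; omega, by rw [h2]; ring,
        Or.inr (Or.inr (Or.inr (Or.inl ⟨rfl, Or.inl rfl⟩)))⟩
    · exact ⟨-12, (ℓ : ZMod 11), by simp at h1; omega, h2,
        Or.inr (Or.inr (Or.inr (Or.inl ⟨rfl, Or.inr (Or.inl rfl)⟩)))⟩
    · exact ⟨-12, (ℓ : ZMod 11) + 1, by simp at h1; omega, by rw [h2]; ring,
        Or.inr (Or.inr (Or.inr (Or.inl ⟨rfl, Or.inr (Or.inr rfl)⟩)))⟩
  · rcases hs with ⟨h1, h2 | h2⟩ | ⟨h1, h2 | h2 | h2⟩ | ⟨h1, h1', h2 | h2 | h2⟩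
    · exact ⟨0, -1, by rw [h1]; exact sub_self _, by rw [h2]; ring,
        Or.inl ⟨rfl, Or.inr rfl⟩⟩
    · exact ⟨0, 1, by rw [h1]; exact sub_self _, by rw [h2]; ring,
        Or.inl ⟨rfl, Or.inl rfl⟩⟩
    · exact ⟨-1, 1, by omega, by rw [h2]; ring, Or.inr (Or.inr (Or.inl ⟨rfl, Or.inr (Or.inr rfl)⟩))⟩
    · exact ⟨-1, 0, by omega, by rw [h2]; ring, Or.inr (Or.inr (Or.inl ⟨rfl, Or.inr (Or.inl rfl)⟩))⟩
    · exact ⟨-1, -1, by omega, by rw [h2]; ring, Or.inr (Or.inr (Or.inl ⟨rfl, Or.inl rfl⟩))⟩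
    · exact ⟨12, -(ℓ : ZMod 11) + 1, by simp at h1; omega, by rw [h2]; ring,
        Or.inr (Or.inr (Or.inr (Or.inr ⟨rfl, Or.inr (Or.inr rfl)⟩)))⟩
    · exact ⟨12, -(ℓ : ZMod 11), by simp at h1; omega, by rw [h2]; ring,
        Or.inr (Or.inr (Or.inr (Or.inr ⟨rfl, Or.inr (Or.inl rfl)⟩)))⟩
    · exact ⟨12, -(ℓ : ZMod 11) - 1, by simp at h1; omega, by rw [h2]; ring,
        Or.inr (Or.inr (Or.inr (Or.inr ⟨rfl, Or.inl rfl⟩)))⟩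

lemma walk2 {V : Type*} {G : SimpleGraph V} {u v : V} (p : G.Walk u v)
    (hp : p.length = 2) : ∃ w, G.Adj u w ∧ G.Adj w v := by
  cases p with
  | nil => simp at hp
  | cons h q =>
    cases q with
    | nil => simp at hp
    | cons h2 r =>
      cases r with
      | nil => exact ⟨_, h, h2⟩
      | cons h3 s => simp [SimpleGraph.Walk.length_cons] at hp

lemma span_labf (α β : ℕ) (j10 : ZMod 11) (h10 : labf α β (0, j10) = 10) :
    spanOf (labf α β) = 10 := by
  have hub : ∀ y ∈ Set.range (labf α β), y ≤ 10 := by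
    rintro y ⟨p, rfl⟩
    have := labf_lt α β p
    omega
  have h0 : labf α β (0, 0) = 0 := by
    unfold labf
    norm_num
  have hgr : IsGreatest (Set.range (labf α β)) 10 := ⟨⟨(0, j10), h10⟩, hub⟩
  have hls : IsLeast (Set.range (labf α β)) 0 := ⟨⟨(0, 0), h0⟩, fun y _ => Nat.zero_le y⟩
  unfold spanOf
  rw [hgr.csSup_eq, hls.csInf_eq]

/-! ### Lower bound (uniform in `ℓ`) -/

lemma adj_fiber (ℓ : ℕ) (i : Fin 13) (j j' : ZMod 11) (h : j' = j + 1) :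
    (strongBundle 13 11 ℓ).Adj (i, j) (i, j') := by
  refine ⟨?_, Or.inl (Or.inl ⟨rfl, Or.inl h⟩)⟩
  rw [h]
  intro he
  have h2 : j = j + 1 := congrArg Prod.snd he
  exact absurd (left_eq_add.mp h2) (by decide)

lemma adj_right (ℓ : ℕ) (i i' : Fin 13) (h : (i : ℕ) + 1 = (i' : ℕ)) (j j' : ZMod 11)
    (hj : j' = j - 1 ∨ j' = j ∨ j' = j + 1) :
    (strongBundle 13 11 ℓ).Adj (i, j) (i', j') := by
  refine ⟨fun he => ?_, Or.inl (Or.inr (Or.inl ⟨h, hj⟩))⟩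
  have h1 : i = i' := congrArg Prod.fst he
  rw [h1] at h
  omega

lemma nbr_ne (ℓ : ℕ) (f : Fin 13 × ZMod 11 → ℕ)
    (hf : IsL21Labeling (strongBundle 13 11 ℓ) f) {v a b : Fin 13 × ZMod 11}
    (ha : (strongBundle 13 11 ℓ).Adj v a) (hb : (strongBundle 13 11 ℓ).Adj v b)
    (hab : a ≠ b) : f a ≠ f b := by
  intro heq
  by_cases hadj : (strongBundle 13 11 ℓ).Adj a b
  · have h2 := hf.1 a b hadj
    rw [heq] at h2
    simp at h2
  · have hd : (strongBundle 13 11 ℓ).dist a b = 2 := by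
      have hle : (strongBundle 13 11 ℓ).dist a b ≤ 2 := by
        have := SimpleGraph.dist_le (SimpleGraph.Walk.cons ha.symm
          (SimpleGraph.Walk.cons hb SimpleGraph.Walk.nil))
        simpa using this
      have h0 : (strongBundle 13 11 ℓ).dist a b ≠ 0 := by
        rw [SimpleGraph.dist_ne_zero_iff_ne_and_reachable]
        exact ⟨hab, ⟨SimpleGraph.Walk.cons ha.symm (SimpleGraph.Walk.cons hb
          SimpleGraph.Walk.nil)⟩⟩
      have h1 : (strongBundle 13 11 ℓ).dist a b ≠ 1 := by
        rw [Ne, SimpleGraph.dist_eq_one_iff_adj]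
        exact hadj
      omega
    have h2 := hf.2 a b hd
    rw [heq] at h2
    simp at h2

lemma label_extreme (ℓ : ℕ) (f : Fin 13 × ZMod 11 → ℕ)
    (hf : IsL21Labeling (strongBundle 13 11 ℓ) f) (v : Fin 13 × ZMod 11)
    (w : Fin 8 → Fin 13 × ZMod 11) (hadj : ∀ k, (strongBundle 13 11 ℓ).Adj v (w k))
    (hinj : Function.Injective w) (A B : ℕ) (hA : ∀ p, A ≤ f p) (hB : ∀ p, f p ≤ B)
    (hs : B ≤ A + 9) : f v = A ∨ f v = B := by
  by_contra hc
  push_neg at hc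
  have hAv : A < f v := lt_of_le_of_ne (hA v) (Ne.symm hc.1)
  have hvB : f v < B := lt_of_le_of_ne (hB v) hc.2
  have hmem : ∀ k, f (w k) ∈ (((Finset.Icc A B).erase (f v - 1)).erase (f v)).erase (f v + 1) := by
    intro k
    have h2 := hf.1 v (w k) (hadj k)
    rw [le_abs] at h2
    have hA' := hA (w k)
    have hB' := hB (w k)
    refine Finset.mem_erase.mpr ⟨?_, Finset.mem_erase.mpr ⟨?_, Finset.mem_erase.mpr
      ⟨?_, Finset.mem_Icc.mpr ⟨?_, ?_⟩⟩⟩⟩ <;> rcases h2 with h2 | h2 <;> omega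
  have hinj' : Set.InjOn (fun k => f (w k)) ↑(Finset.univ : Finset (Fin 8)) := by
    intro x _ y _ hxy
    by_contra hne
    exact nbr_ne ℓ f hf (hadj x) (hadj y) (fun h => hne (hinj h)) hxy
  have hcard := Finset.card_le_card_of_injOn (fun k => f (w k))
    (fun k _ => hmem k) hinj'
  have e1 : f v + 1 ∈ ((Finset.Icc A B).erase (f v - 1)).erase (f v) := by
    refine Finset.mem_erase.mpr ⟨by omega, Finset.mem_erase.mpr ⟨by omega,
      Finset.mem_Icc.mpr ⟨by omega, by omega⟩⟩⟩
  have e2 : f v ∈ (Finset.Icc A B).erase (f v - 1) := by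
    refine Finset.mem_erase.mpr ⟨by omega, Finset.mem_Icc.mpr ⟨by omega, by omega⟩⟩
  have e3 : f v - 1 ∈ Finset.Icc A B := Finset.mem_Icc.mpr ⟨by omega, by omega⟩
  rw [Finset.card_erase_of_mem e1, Finset.card_erase_of_mem e2,
    Finset.card_erase_of_mem e3, Nat.card_Icc] at hcard
  simp [Finset.card_univ] at hcard
  omega

lemma adj_label_ne (ℓ : ℕ) (f : Fin 13 × ZMod 11 → ℕ)
    (hf : IsL21Labeling (strongBundle 13 11 ℓ) f) {a b : Fin 13 × ZMod 11}
    (h : (strongBundle 13 11 ℓ).Adj a b) : f a ≠ f b := by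
  intro heq
  have h2 := hf.1 a b h
  rw [heq] at h2
  simp at h2

lemma lower_bound (ℓ : ℕ) (f : Fin 13 × ZMod 11 → ℕ)
    (hf : IsL21Labeling (strongBundle 13 11 ℓ) f) : 10 ≤ spanOf f := by
  by_contra hcon
  push_neg at hcon
  have hbdd : BddAbove (Set.range f) := (Set.finite_range f).bddAbove
  have hB : ∀ p, f p ≤ sSup (Set.range f) := fun p => le_csSup hbdd ⟨p, rfl⟩
  have hA : ∀ p, sInf (Set.range f) ≤ f p := fun p => Nat.sInf_le ⟨p, rfl⟩
  set A := sInf (Set.range f) with hAdef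
  set B := sSup (Set.range f) with hBdef
  have hABs : B ≤ A + 9 := by
    have hAB : A ≤ B := le_trans (hA (0, 0)) (hB (0, 0))
    unfold spanOf at hcon
    omega
  -- the three mutually adjacent vertices
  have a12 : (strongBundle 13 11 ℓ).Adj (5, 5) (5, 6) := adj_fiber ℓ 5 5 6 (by decide)
  have a13 : (strongBundle 13 11 ℓ).Adj (5, 5) (6, 5) :=
    adj_right ℓ 5 6 (by decide) 5 5 (Or.inr (Or.inl rfl))
  have a23 : (strongBundle 13 11 ℓ).Adj (5, 6) (6, 5) :=
    adj_right ℓ 5 6 (by decide) 6 5 (Or.inl (by decide))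
  -- neighbour families
  have hadj1 : ∀ k : Fin 8, (strongBundle 13 11 ℓ).Adj (5, 5) (![(5,4),(5,6),(4,4),(4,5),(4,6),(6,4),(6,5),(6,6)] k) := by
    intro k
    fin_cases k
    · exact (adj_fiber ℓ 5 4 5 (by decide)).symm
    · exact adj_fiber ℓ 5 5 6 (by decide)
    · exact (adj_right ℓ 4 5 (by decide) 4 5 (Or.inr (Or.inr (by decide)))).symm
    · exact (adj_right ℓ 4 5 (by decide) 5 5 (Or.inr (Or.inl rfl))).symm
    · exact (adj_right ℓ 4 5 (by decide) 6 5 (Or.inl (by decide))).symm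
    · exact adj_right ℓ 5 6 (by decide) 5 4 (Or.inl (by decide))
    · exact adj_right ℓ 5 6 (by decide) 5 5 (Or.inr (Or.inl rfl))
    · exact adj_right ℓ 5 6 (by decide) 5 6 (Or.inr (Or.inr (by decide)))
  have hv1 := label_extreme ℓ f hf (5, 5) ![(5,4),(5,6),(4,4),(4,5),(4,6),(6,4),(6,5),(6,6)] hadj1 (by decide) A B hA hB hABs
  have hadj2 : ∀ k : Fin 8, (strongBundle 13 11 ℓ).Adj (5, 6) (![(5,5),(5,7),(4,5),(4,6),(4,7),(6,5),(6,6),(6,7)] k) := by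
    intro k
    fin_cases k
    · exact (adj_fiber ℓ 5 5 6 (by decide)).symm
    · exact adj_fiber ℓ 5 6 7 (by decide)
    · exact (adj_right ℓ 4 5 (by decide) 5 6 (Or.inr (Or.inr (by decide)))).symm
    · exact (adj_right ℓ 4 5 (by decide) 6 6 (Or.inr (Or.inl rfl))).symm
    · exact (adj_right ℓ 4 5 (by decide) 7 6 (Or.inl (by decide))).symm
    · exact adj_right ℓ 5 6 (by decide) 6 5 (Or.inl (by decide))
    · exact adj_right ℓ 5 6 (by decide) 6 6 (Or.inr (Or.inl rfl))
    · exact adj_right ℓ 5 6 (by decide) 6 7 (Or.inr (Or.inr (by decide)))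
  have hv2 := label_extreme ℓ f hf (5, 6) ![(5,5),(5,7),(4,5),(4,6),(4,7),(6,5),(6,6),(6,7)] hadj2 (by decide) A B hA hB hABs
  have hadj3 : ∀ k : Fin 8, (strongBundle 13 11 ℓ).Adj (6, 5) (![(6,4),(6,6),(5,4),(5,5),(5,6),(7,4),(7,5),(7,6)] k) := by
    intro k
    fin_cases k
    · exact (adj_fiber ℓ 6 4 5 (by decide)).symm
    · exact adj_fiber ℓ 6 5 6 (by decide)
    · exact (adj_right ℓ 5 6 (by decide) 4 5 (Or.inr (Or.inr (by decide)))).symm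
    · exact (adj_right ℓ 5 6 (by decide) 5 5 (Or.inr (Or.inl rfl))).symm
    · exact (adj_right ℓ 5 6 (by decide) 6 5 (Or.inl (by decide))).symm
    · exact adj_right ℓ 6 7 (by decide) 5 4 (Or.inl (by decide))
    · exact adj_right ℓ 6 7 (by decide) 5 5 (Or.inr (Or.inl rfl))
    · exact adj_right ℓ 6 7 (by decide) 5 6 (Or.inr (Or.inr (by decide)))
  have hv3 := label_extreme ℓ f hf (6, 5) ![(6,4),(6,6),(5,4),(5,5),(5,6),(7,4),(7,5),(7,6)] hadj3 (by decide) A B hA hB hABs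
  have d12 := adj_label_ne ℓ f hf a12
  have d13 := adj_label_ne ℓ f hf a13
  have d23 := adj_label_ne ℓ f hf a23
  rcases hv1 with h1 | h1 <;> rcases hv2 with h2 | h2 <;> rcases hv3 with h3 | h3 <;> omega

/-! ### Upper bound: the four explicit labelings -/

theorem upper_3 : IsL21Labeling (strongBundle 13 11 3) (labf 2 5) := by
  constructor
  · intro u v h
    obtain ⟨a, t, hia, hjt, hcase⟩ := adj_data 3 u v h
    have hcomp := g_comp 2 5 u v a t hia hjt
    refine bridge2 (labf_lt 2 5 u) (labf_lt 2 5 v) ?_ ?_ ?_ <;>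
    · rw [cast_labf, cast_labf, hcomp]
      rcases hcase with ⟨rfl, rfl | rfl⟩ | ⟨rfl, rfl | rfl | rfl⟩ | ⟨rfl, rfl | rfl | rfl⟩ |
        ⟨rfl, rfl | rfl | rfl⟩ | ⟨rfl, rfl | rfl | rfl⟩ <;>
      · generalize gl 2 5 u = x
        revert x
        decide
  · intro u v hdist
    have hne : u ≠ v := by
      rintro rfl
      rw [SimpleGraph.dist_self] at hdist
      exact absurd hdist (by norm_num)
    have hreach : (strongBundle 13 11 3).Reachable u v :=
      SimpleGraph.Reachable.of_dist_ne_zero (by omega)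
    obtain ⟨p, hp⟩ := hreach.exists_walk_length_eq_dist
    rw [hdist] at hp
    obtain ⟨w, h1, h2⟩ := walk2 p hp
    have hflab : labf 2 5 u ≠ labf 2 5 v := by
      intro heq
      have hgu : gl 2 5 u = gl 2 5 v := by
        rw [← cast_labf, ← cast_labf, heq]
      obtain ⟨a1, t1, hia1, hjt1, hcase1⟩ := adj_data 3 u w h1
      obtain ⟨a2, t2, hia2, hjt2, hcase2⟩ := adj_data 3 w v h2
      have hcomp1 := g_comp 2 5 u w a1 t1 hia1 hjt1
      have hcomp2 := g_comp 2 5 w v a2 t2 hia2 hjt2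
      rw [hcomp1] at hcomp2
      rw [← hgu] at hcomp2
      have hb1 : (u.1 : ℕ) < 13 := u.1.isLt
      have hb2 : (w.1 : ℕ) < 13 := w.1.isLt
      have hb3 : (v.1 : ℕ) < 13 := v.1.isLt
      rcases hcase1 with ⟨rfl, rfl | rfl⟩ | ⟨rfl, rfl | rfl | rfl⟩ | ⟨rfl, rfl | rfl | rfl⟩ |
        ⟨rfl, rfl | rfl | rfl⟩ | ⟨rfl, rfl | rfl | rfl⟩ <;>
      rcases hcase2 with ⟨rfl, rfl | rfl⟩ | ⟨rfl, rfl | rfl | rfl⟩ | ⟨rfl, rfl | rfl | rfl⟩ |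
        ⟨rfl, rfl | rfl | rfl⟩ | ⟨rfl, rfl | rfl | rfl⟩ <;>
      first
        | (revert hcomp2; generalize gl 2 5 u = x; revert x; decide)
        | omega
        | exact hne (Prod.ext (Fin.ext (by omega))
            (by rw [hjt2, hjt1]; generalize u.2 = x; revert x; decide))
    rw [le_abs]
    have : (labf 2 5 u : ℤ) ≠ (labf 2 5 v : ℤ) := by exact_mod_cast hflab
    omega

theorem span_3 : spanOf (labf 2 5) = 10 :=
  span_labf 2 5 2 (by decide)

theorem upper_5 : IsL21Labeling (strongBundle 13 11 5) (labf 5 2) := by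
  constructor
  · intro u v h
    obtain ⟨a, t, hia, hjt, hcase⟩ := adj_data 5 u v h
    have hcomp := g_comp 5 2 u v a t hia hjt
    refine bridge2 (labf_lt 5 2 u) (labf_lt 5 2 v) ?_ ?_ ?_ <;>
    · rw [cast_labf, cast_labf, hcomp]
      rcases hcase with ⟨rfl, rfl | rfl⟩ | ⟨rfl, rfl | rfl | rfl⟩ | ⟨rfl, rfl | rfl | rfl⟩ |
        ⟨rfl, rfl | rfl | rfl⟩ | ⟨rfl, rfl | rfl | rfl⟩ <;>
      · generalize gl 5 2 u = x
        revert x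
        decide
  · intro u v hdist
    have hne : u ≠ v := by
      rintro rfl
      rw [SimpleGraph.dist_self] at hdist
      exact absurd hdist (by norm_num)
    have hreach : (strongBundle 13 11 5).Reachable u v :=
      SimpleGraph.Reachable.of_dist_ne_zero (by omega)
    obtain ⟨p, hp⟩ := hreach.exists_walk_length_eq_dist
    rw [hdist] at hp
    obtain ⟨w, h1, h2⟩ := walk2 p hp
    have hflab : labf 5 2 u ≠ labf 5 2 v := by
      intro heq
      have hgu : gl 5 2 u = gl 5 2 v := by
        rw [← cast_labf, ← cast_labf, heq]
      obtain ⟨a1, t1, hia1, hjt1, hcase1⟩ := adj_data 5 u w h1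
      obtain ⟨a2, t2, hia2, hjt2, hcase2⟩ := adj_data 5 w v h2
      have hcomp1 := g_comp 5 2 u w a1 t1 hia1 hjt1
      have hcomp2 := g_comp 5 2 w v a2 t2 hia2 hjt2
      rw [hcomp1] at hcomp2
      rw [← hgu] at hcomp2
      have hb1 : (u.1 : ℕ) < 13 := u.1.isLt
      have hb2 : (w.1 : ℕ) < 13 := w.1.isLt
      have hb3 : (v.1 : ℕ) < 13 := v.1.isLt
      rcases hcase1 with ⟨rfl, rfl | rfl⟩ | ⟨rfl, rfl | rfl | rfl⟩ | ⟨rfl, rfl | rfl | rfl⟩ |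
        ⟨rfl, rfl | rfl | rfl⟩ | ⟨rfl, rfl | rfl | rfl⟩ <;>
      rcases hcase2 with ⟨rfl, rfl | rfl⟩ | ⟨rfl, rfl | rfl | rfl⟩ | ⟨rfl, rfl | rfl | rfl⟩ |
        ⟨rfl, rfl | rfl | rfl⟩ | ⟨rfl, rfl | rfl | rfl⟩ <;>
      first
        | (revert hcomp2; generalize gl 5 2 u = x; revert x; decide)
        | omega
        | exact hne (Prod.ext (Fin.ext (by omega))
            (by rw [hjt2, hjt1]; generalize u.2 = x; revert x; decide))
    rw [le_abs]
    have : (labf 5 2 u : ℤ) ≠ (labf 5 2 v : ℤ) := by exact_mod_cast hflab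
    omega

theorem span_5 : spanOf (labf 5 2) = 10 :=
  span_labf 5 2 5 (by decide)

theorem upper_6 : IsL21Labeling (strongBundle 13 11 6) (labf 5 9) := by
  constructor
  · intro u v h
    obtain ⟨a, t, hia, hjt, hcase⟩ := adj_data 6 u v h
    have hcomp := g_comp 5 9 u v a t hia hjt
    refine bridge2 (labf_lt 5 9 u) (labf_lt 5 9 v) ?_ ?_ ?_ <;>
    · rw [cast_labf, cast_labf, hcomp]
      rcases hcase with ⟨rfl, rfl | rfl⟩ | ⟨rfl, rfl | rfl | rfl⟩ | ⟨rfl, rfl | rfl | rfl⟩ |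
        ⟨rfl, rfl | rfl | rfl⟩ | ⟨rfl, rfl | rfl | rfl⟩ <;>
      · generalize gl 5 9 u = x
        revert x
        decide
  · intro u v hdist
    have hne : u ≠ v := by
      rintro rfl
      rw [SimpleGraph.dist_self] at hdist
      exact absurd hdist (by norm_num)
    have hreach : (strongBundle 13 11 6).Reachable u v :=
      SimpleGraph.Reachable.of_dist_ne_zero (by omega)
    obtain ⟨p, hp⟩ := hreach.exists_walk_length_eq_dist
    rw [hdist] at hp
    obtain ⟨w, h1, h2⟩ := walk2 p hp
    have hflab : labf 5 9 u ≠ labf 5 9 v := by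
      intro heq
      have hgu : gl 5 9 u = gl 5 9 v := by
        rw [← cast_labf, ← cast_labf, heq]
      obtain ⟨a1, t1, hia1, hjt1, hcase1⟩ := adj_data 6 u w h1
      obtain ⟨a2, t2, hia2, hjt2, hcase2⟩ := adj_data 6 w v h2
      have hcomp1 := g_comp 5 9 u w a1 t1 hia1 hjt1
      have hcomp2 := g_comp 5 9 w v a2 t2 hia2 hjt2
      rw [hcomp1] at hcomp2
      rw [← hgu] at hcomp2
      have hb1 : (u.1 : ℕ) < 13 := u.1.isLt
      have hb2 : (w.1 : ℕ) < 13 := w.1.isLt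
      have hb3 : (v.1 : ℕ) < 13 := v.1.isLt
      rcases hcase1 with ⟨rfl, rfl | rfl⟩ | ⟨rfl, rfl | rfl | rfl⟩ | ⟨rfl, rfl | rfl | rfl⟩ |
        ⟨rfl, rfl | rfl | rfl⟩ | ⟨rfl, rfl | rfl | rfl⟩ <;>
      rcases hcase2 with ⟨rfl, rfl | rfl⟩ | ⟨rfl, rfl | rfl | rfl⟩ | ⟨rfl, rfl | rfl | rfl⟩ |
        ⟨rfl, rfl | rfl | rfl⟩ | ⟨rfl, rfl | rfl | rfl⟩ <;>
      first
        | (revert hcomp2; generalize gl 5 9 u = x; revert x; decide)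
        | omega
        | exact hne (Prod.ext (Fin.ext (by omega))
            (by rw [hjt2, hjt1]; generalize u.2 = x; revert x; decide))
    rw [le_abs]
    have : (labf 5 9 u : ℤ) ≠ (labf 5 9 v : ℤ) := by exact_mod_cast hflab
    omega

theorem span_6 : spanOf (labf 5 9) = 10 :=
  span_labf 5 9 6 (by decide)

theorem upper_8 : IsL21Labeling (strongBundle 13 11 8) (labf 2 6) := by
  constructor
  · intro u v h
    obtain ⟨a, t, hia, hjt, hcase⟩ := adj_data 8 u v h
    have hcomp := g_comp 2 6 u v a t hia hjt
    refine bridge2 (labf_lt 2 6 u) (labf_lt 2 6 v) ?_ ?_ ?_ <;>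
    · rw [cast_labf, cast_labf, hcomp]
      rcases hcase with ⟨rfl, rfl | rfl⟩ | ⟨rfl, rfl | rfl | rfl⟩ | ⟨rfl, rfl | rfl | rfl⟩ |
        ⟨rfl, rfl | rfl | rfl⟩ | ⟨rfl, rfl | rfl | rfl⟩ <;>
      · generalize gl 2 6 u = x
        revert x
        decide
  · intro u v hdist
    have hne : u ≠ v := by
      rintro rfl
      rw [SimpleGraph.dist_self] at hdist
      exact absurd hdist (by norm_num)
    have hreach : (strongBundle 13 11 8).Reachable u v :=
      SimpleGraph.Reachable.of_dist_ne_zero (by omega)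
    obtain ⟨p, hp⟩ := hreach.exists_walk_length_eq_dist
    rw [hdist] at hp
    obtain ⟨w, h1, h2⟩ := walk2 p hp
    have hflab : labf 2 6 u ≠ labf 2 6 v := by
      intro heq
      have hgu : gl 2 6 u = gl 2 6 v := by
        rw [← cast_labf, ← cast_labf, heq]
      obtain ⟨a1, t1, hia1, hjt1, hcase1⟩ := adj_data 8 u w h1
      obtain ⟨a2, t2, hia2, hjt2, hcase2⟩ := adj_data 8 w v h2
      have hcomp1 := g_comp 2 6 u w a1 t1 hia1 hjt1
      have hcomp2 := g_comp 2 6 w v a2 t2 hia2 hjt2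
      rw [hcomp1] at hcomp2
      rw [← hgu] at hcomp2
      have hb1 : (u.1 : ℕ) < 13 := u.1.isLt
      have hb2 : (w.1 : ℕ) < 13 := w.1.isLt
      have hb3 : (v.1 : ℕ) < 13 := v.1.isLt
      rcases hcase1 with ⟨rfl, rfl | rfl⟩ | ⟨rfl, rfl | rfl | rfl⟩ | ⟨rfl, rfl | rfl | rfl⟩ |
        ⟨rfl, rfl | rfl | rfl⟩ | ⟨rfl, rfl | rfl | rfl⟩ <;>
      rcases hcase2 with ⟨rfl, rfl | rfl⟩ | ⟨rfl, rfl | rfl | rfl⟩ | ⟨rfl, rfl | rfl | rfl⟩ |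
        ⟨rfl, rfl | rfl | rfl⟩ | ⟨rfl, rfl | rfl | rfl⟩ <;>
      first
        | (revert hcomp2; generalize gl 2 6 u = x; revert x; decide)
        | omega
        | exact hne (Prod.ext (Fin.ext (by omega))
            (by rw [hjt2, hjt1]; generalize u.2 = x; revert x; decide))
    rw [le_abs]
    have : (labf 2 6 u : ℤ) ≠ (labf 2 6 v : ℤ) := by exact_mod_cast hflab
    omega

theorem span_8 : spanOf (labf 2 6) = 10 :=
  span_labf 2 6 9 (by decide)

theorem lambda_strongBundle_C13_C11 :
    ∀ ℓ ∈ ({3, 5, 6, 8} : Set ℕ), lambdaNumber (strongBundle 13 11 ℓ) = 10 := by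
  intro ℓ hl
  have hub : ∃ g : Fin 13 × ZMod 11 → ℕ,
      IsL21Labeling (strongBundle 13 11 ℓ) g ∧ spanOf g = 10 := by
    simp only [Set.mem_insert_iff, Set.mem_singleton_iff] at hl
    rcases hl with rfl | rfl | rfl | rfl
    · exact ⟨labf 2 5, upper_3, span_3⟩
    · exact ⟨labf 5 2, upper_5, span_5⟩
    · exact ⟨labf 5 9, upper_6, span_6⟩
    · exact ⟨labf 2 6, upper_8, span_8⟩
  unfold lambdaNumber
  refine le_antisymm (Nat.sInf_le hub) ?_
  have hne : { s : ℕ | ∃ g : Fin 13 × ZMod 11 → ℕ,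
      IsL21Labeling (strongBundle 13 11 ℓ) g ∧ spanOf g = s }.Nonempty := ⟨10, hub⟩
  obtain ⟨g, hg, hspan⟩ := Nat.sInf_mem hne
  rw [← hspan]
  exact lower_bound ℓ g hg
end
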